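/- arXiv:2008.06769 — 9 statements merged into one kernel-verified Lean document; each statement's English description precedes it below -/
import Mathlib

section
/- Let H be an infinite-dimensional complex Hilbert space. Then for every bounded linear operator T on H, the distance from T to the closed unit ball of the space of compact operators satisfies d(T, B_{K(H)}) = max{‖T‖ − 1, d(T, K(H))}. -/
set_option synthInstance.maxHeartbeats 1000000
set_option maxHeartbeats 1000000
set_option linter.unusedSectionVars false
set_option linter.unusedVariables false
open ContinuousLinearMap in
section
variable {H : Type*} [NormedAddCommGroup H] [InnerProductSpace ℂ H] [CompleteSpace H]
local notation "⟪" x ", " y "⟫" => @inner ℂ _ _ x y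

lemma aux_norm_sq (W : H →L[ℂ] H) (x : H) :
    ‖W x‖ ^ 2 = RCLike.re ⟪(star W * W) x, x⟫ := by
  rw [ContinuousLinearMap.mul_apply, star_eq_adjoint, adjoint_inner_left]
  exact (inner_self_eq_norm_sq (𝕜 := ℂ) _).symm

lemma aux_norm_le (W : H →L[ℂ] H) {c : ℝ} (hc : 0 ≤ c) (h : ‖star W * W‖ ≤ c ^ 2) :
    ‖W‖ ≤ c := by
  refine opNorm_le_bound W hc fun x => ?_
  have h1 : ‖W x‖ ^ 2 ≤ (c * ‖x‖) ^ 2 := by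
    rw [aux_norm_sq]
    calc RCLike.re ⟪(star W * W) x, x⟫ ≤ ‖⟪(star W * W) x, x⟫‖ := RCLike.re_le_norm _
    _ ≤ ‖(star W * W) x‖ * ‖x‖ := norm_inner_le_norm _ _
    _ ≤ (‖star W * W‖ * ‖x‖) * ‖x‖ := by
        gcongr; exact le_opNorm _ _
    _ ≤ (c ^ 2 * ‖x‖) * ‖x‖ := by gcongr
    _ = (c * ‖x‖) ^ 2 := by ring
  have h2 := Real.sqrt_le_sqrt h1
  rwa [Real.sqrt_sq (norm_nonneg _), Real.sqrt_sq (mul_nonneg hc (norm_nonneg _))] at h2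

lemma aux_norm_eq (W S : H →L[ℂ] H) (h : star W * W = star S * S) (x : H) :
    ‖W x‖ = ‖S x‖ := by
  have h1 : ‖W x‖ ^ 2 = ‖S x‖ ^ 2 := by rw [aux_norm_sq, aux_norm_sq, h]
  have h2 := congrArg Real.sqrt h1
  rwa [Real.sqrt_sq (norm_nonneg _), Real.sqrt_sq (norm_nonneg _)] at h2
end

open ContinuousLinearMap Polynomial in
section
variable {H : Type*} [NormedAddCommGroup H] [InnerProductSpace ℂ H] [CompleteSpace H]

lemma aux_mul_left {C : H →L[ℂ] H} (S : H →L[ℂ] H) (hC : IsCompactOperator ⇑C) :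
    IsCompactOperator ⇑(S * C) := by
  have : ⇑(S * C) = ⇑S ∘ ⇑C := rfl
  rw [this]
  exact hC.continuous_comp S.continuous

lemma aux_mul_right {C : H →L[ℂ] H} (S : H →L[ℂ] H) (hC : IsCompactOperator ⇑C) :
    IsCompactOperator ⇑(C * S) := by
  have : ⇑(C * S) = ⇑C ∘ ⇑S := rfl
  rw [this]
  exact hC.comp_clm S

lemma aux_sub {C D : H →L[ℂ] H} (hC : IsCompactOperator ⇑C) (hD : IsCompactOperator ⇑D) :
    IsCompactOperator ⇑(C - D) := by
  have : ⇑(C - D) = ⇑C - ⇑D := by ext x; simp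
  rw [this]; exact hC.sub hD

lemma aux_add {C D : H →L[ℂ] H} (hC : IsCompactOperator ⇑C) (hD : IsCompactOperator ⇑D) :
    IsCompactOperator ⇑(C + D) := by
  have : ⇑(C + D) = ⇑C + ⇑D := by ext x; simp
  rw [this]; exact hC.add hD

lemma aux_pow (A B : H →L[ℂ] H) (h : IsCompactOperator ⇑(A - B)) (n : ℕ) :
    IsCompactOperator ⇑(A ^ (n + 1) - B ^ (n + 1)) := by
  induction n with
  | zero => simpa using h
  | succ n ih =>
    have key : A ^ (n + 2) - B ^ (n + 2)
        = A * (A ^ (n + 1) - B ^ (n + 1)) + (A - B) * B ^ (n + 1) := by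
      rw [pow_succ A (n+1), pow_succ B (n+1), mul_sub, sub_mul,
        ← pow_succ A (n+1), ← pow_succ' A (n+1), ← pow_succ B (n+1), ← pow_succ' B (n+1)]
      abel
    rw [key]
    exact aux_add (aux_mul_left A ih) (aux_mul_right _ h)

lemma aux_aeval (A B : H →L[ℂ] H) (h : IsCompactOperator ⇑(A - B)) (p : ℝ[X]) :
    IsCompactOperator ⇑(aeval A p - aeval B p) := by
  induction p using Polynomial.induction_on with
  | C r => simpa using isCompactOperator_zero
  | add p q hp hq =>
    have key : aeval A (p + q) - aeval B (p + q)
        = (aeval A p - aeval B p) + (aeval A q - aeval B q) := by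
      simp only [map_add]; abel
    rw [key]; exact aux_add hp hq
  | monomial n r _ =>
    have key : aeval A (Polynomial.C r * X ^ (n + 1)) - aeval B (Polynomial.C r * X ^ (n + 1))
        = r • (A ^ (n + 1) - B ^ (n + 1)) := by
      simp [smul_sub, Algebra.algebraMap_eq_smul_one, smul_mul_assoc]
    rw [key]
    have : ⇑(r • (A ^ (n + 1) - B ^ (n + 1))) = r • ⇑(A ^ (n + 1) - B ^ (n + 1)) := by
      ext x; simp
    rw [this]
    exact (aux_pow A B h n).smul r
end

open ContinuousLinearMap Polynomial Set Metric in
section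
variable {H : Type*} [NormedAddCommGroup H] [InnerProductSpace ℂ H] [CompleteSpace H]
  [Nontrivial H]

-- polynomial approximation on an interval
lemma aux_poly_approx (f : ℝ → ℝ) (hf : Continuous f) (R ε : ℝ) (hε : 0 < ε) :
    ∃ p : ℝ[X], ∀ x ∈ Set.Icc (-R) R, |f x - p.eval x| ≤ ε := by
  set I : Set ℝ := Set.Icc (-R) R
  set f' : C(I, ℝ) := ⟨fun x => f x, hf.comp continuous_subtype_val⟩
  have h1 : f' ∈ closure (polynomialFunctions I : Set C(I, ℝ)) := by
    have := polynomialFunctions_closure_eq_top (-R) R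
    have h2 : f' ∈ (polynomialFunctions I).topologicalClosure := by
      rw [this]; trivial
    exact h2
  rw [Metric.mem_closure_iff] at h1
  obtain ⟨g, hg, hdist⟩ := h1 ε hε
  rw [polynomialFunctions_coe] at hg
  obtain ⟨p, rfl⟩ := hg
  refine ⟨p, fun x hx => ?_⟩
  have := ContinuousMap.dist_apply_le_dist (f := f') (g := p.toContinuousMapOnAlgHom I) ⟨x, hx⟩
  rw [Real.dist_eq] at this
  exact le_trans this hdist.le

lemma aux_vanish (B : H →L[ℂ] H) (hB : IsSelfAdjoint B) (f : ℝ → ℝ)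
    (h : ∀ x ∈ spectrum ℝ B, f x = 0) : cfc f B = 0 := by
  rw [show (0 : H →L[ℂ] H) = cfc (fun _ : ℝ => (0:ℝ)) B from (cfc_const_zero ℝ B).symm]
  exact cfc_congr h

lemma aux_spectrum_Icc (A : H →L[ℂ] H) {R : ℝ} (hR : ‖A‖ ≤ R) :
    spectrum ℝ A ⊆ Set.Icc (-R) R := by
  intro x hx
  have := spectrum.norm_le_norm_of_mem hx
  rw [Real.norm_eq_abs] at this
  have := le_trans this hR
  exact abs_le.mp this

lemma aux_cfc_diff_compact {A B : H →L[ℂ] H} (hA : IsSelfAdjoint A) (hB : IsSelfAdjoint B)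
    (h : IsCompactOperator ⇑(A - B)) (f : ℝ → ℝ) (hf : Continuous f) :
    IsCompactOperator ⇑(cfc f A - cfc f B) := by
  have hcl : (cfc f A - cfc f B) ∈ {S : H →L[ℂ] H | IsCompactOperator ⇑S} := by
    rw [← IsClosed.closure_eq (isClosed_setOf_isCompactOperator (𝕜₁ := ℂ) (𝕜₂ := ℂ))]
    rw [Metric.mem_closure_iff]
    intro ε hε
    set R : ℝ := max ‖A‖ ‖B‖ with hRdef
    obtain ⟨p, hp⟩ := aux_poly_approx f hf R (ε/3) (by linarith)
    have hsA : spectrum ℝ A ⊆ Set.Icc (-R) R := aux_spectrum_Icc A (le_max_left _ _)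
    have hsB : spectrum ℝ B ⊆ Set.Icc (-R) R := aux_spectrum_Icc B (le_max_right _ _)
    refine ⟨aeval A p - aeval B p, aux_aeval A B h p, ?_⟩
    have keyA : ‖cfc f A - aeval A p‖ ≤ ε/3 := by
      rw [← cfc_polynomial p A, ← cfc_sub f p.eval A (hf.continuousOn)
        ((Polynomial.continuous p).continuousOn)]
      refine norm_cfc_le (by linarith) fun x hx => ?_
      rw [Real.norm_eq_abs]
      exact hp x (hsA hx)
    have keyB : ‖cfc f B - aeval B p‖ ≤ ε/3 := by
      rw [← cfc_polynomial p B, ← cfc_sub f p.eval B (hf.continuousOn)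
        ((Polynomial.continuous p).continuousOn)]
      refine norm_cfc_le (by linarith) fun x hx => ?_
      rw [Real.norm_eq_abs]
      exact hp x (hsB hx)
    rw [dist_eq_norm]
    calc ‖(cfc f A - cfc f B) - (aeval A p - aeval B p)‖
        = ‖(cfc f A - aeval A p) - (cfc f B - aeval B p)‖ := by rw [sub_sub_sub_comm]
      _ ≤ ‖cfc f A - aeval A p‖ + ‖cfc f B - aeval B p‖ := norm_sub_le _ _
      _ ≤ ε/3 + ε/3 := add_le_add keyA keyB
      _ < ε := by linarith
  exact hcl
end
open ContinuousLinearMap Set Metric in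
section
variable {H : Type*} [NormedAddCommGroup H] [InnerProductSpace ℂ H] [CompleteSpace H]
  [Nontrivial H]

/-- Schauder: the adjoint of a compact operator on a Hilbert space is compact. -/
lemma aux_star_compact {C : H →L[ℂ] H} (hC : IsCompactOperator ⇑C) :
    IsCompactOperator ⇑(star C) := by
  set D : H →L[ℂ] H := C * star C with hD
  have hDc : IsCompactOperator ⇑D := aux_mul_right (star C) hC
  have hDsa : IsSelfAdjoint D := IsSelfAdjoint.mul_star_self C
  have hDpos : (0 : H →L[ℂ] H) ≤ D := by
    have := star_mul_self_nonneg (star C); rwa [star_star] at this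
  set S : H →L[ℂ] H := cfc Real.sqrt D with hS
  have hSsa : IsSelfAdjoint S := cfc_predicate _ _
  have hSc : IsCompactOperator ⇑S := by
    have h0 : cfc Real.sqrt (0 : H →L[ℂ] H) = 0 := by
      refine aux_vanish 0 (IsSelfAdjoint.zero _) _ fun x hx => ?_
      rw [spectrum.zero_eq, Set.mem_singleton_iff] at hx
      simp [hx]
    have := aux_cfc_diff_compact hDsa (IsSelfAdjoint.zero _) (by simpa using hDc)
      Real.sqrt Real.continuous_sqrt
    rwa [h0, sub_zero] at this
  have hSS : star (star C) * (star C) = star S * S := by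
    rw [hSsa.star_eq, star_star]
    have h1 : S * S = cfc (fun x : ℝ => Real.sqrt x * Real.sqrt x) D :=
      (cfc_mul _ _ D Real.continuous_sqrt.continuousOn Real.continuous_sqrt.continuousOn).symm
    rw [h1]
    have h2 : cfc (fun x : ℝ => Real.sqrt x * Real.sqrt x) D = cfc (fun x : ℝ => x) D := by
      refine cfc_congr fun x hx => ?_
      exact Real.mul_self_sqrt (spectrum_nonneg_of_nonneg hDpos hx)
    rw [h2, cfc_id' ℝ D]
  have hkey : ∀ x : H, ‖(star C) x‖ = ‖S x‖ := aux_norm_eq (star C) S hSS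
  -- total boundedness transfer
  have h1 : IsCompact (closure ((⇑S) '' Metric.ball 0 1)) := by
    have := (isCompactOperator_iff_isCompact_closure_image_ball
      (σ₁₂ := RingHom.id ℂ) S.toLinearMap zero_lt_one).mp hSc
    exact this
  have htb : TotallyBounded ((⇑S) '' Metric.ball 0 1) :=
    h1.totallyBounded.subset subset_closure
  have htb' : TotallyBounded ((⇑(star C)) '' Metric.ball 0 1) := by
    rw [Metric.totallyBounded_iff]
    intro ε hε
    obtain ⟨t, hts, htf, hcov⟩ :=
      totallyBounded_iff_subset.mp htb _ (Metric.dist_mem_uniformity hε)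
    have hts' : ∀ y ∈ t, ∃ x ∈ Metric.ball (0:H) 1, S x = y := fun y hy => hts hy
    choose g hgball hgS using hts'
    refine ⟨{z | ∃ y, ∃ hy : y ∈ t, (star C) (g y hy) = z},
      htf.dependent_image _, ?_⟩
    rintro z ⟨x, hx, rfl⟩
    obtain ⟨y, hy⟩ := Set.mem_iUnion₂.mp (hcov ⟨x, hx, rfl⟩)
    obtain ⟨hyt, hdist⟩ := hy
    refine Set.mem_iUnion₂.mpr ⟨(star C) (g y hyt), ⟨y, hyt, rfl⟩, ?_⟩
    rw [Metric.mem_ball, dist_eq_norm, ← map_sub, hkey, map_sub, ← dist_eq_norm, hgS y hyt]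
    exact hdist
  have h2 : IsCompact (closure ((⇑(star C)) '' Metric.ball 0 1)) :=
    TotallyBounded.isCompact_of_isClosed htb'.closure isClosed_closure
  exact (isCompactOperator_iff_isCompact_closure_image_ball
    (σ₁₂ := RingHom.id ℂ) (star C).toLinearMap zero_lt_one).mpr h2
end
open ContinuousLinearMap in
section
variable {H : Type*} [NormedAddCommGroup H] [InnerProductSpace ℂ H] [CompleteSpace H]
  [Nontrivial H]

lemma aux_sandwich (A : H →L[ℂ] H) (hA : IsSelfAdjoint A) (g : ℝ → ℝ) (hg : Continuous g) :
    cfc g A * A * cfc g A = cfc (fun t => g t * t * g t) A := by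
  have e1 : cfc (fun t : ℝ => g t * t * g t) A
      = cfc (fun t : ℝ => g t * t) A * cfc g A :=
    cfc_mul _ _ A (by fun_prop) hg.continuousOn
  have e2 : cfc (fun t : ℝ => g t * t) A = cfc g A * cfc (fun t : ℝ => t) A :=
    cfc_mul _ _ A hg.continuousOn (by fun_prop)
  rw [e1, e2, cfc_id' ℝ A]
end


lemma aux_f_zero (c t : ℝ) (hc : 0 < c) (htc : t ≤ c ^ 2) :
    max 0 (min 1 (Real.sqrt t - c)) / Real.sqrt (max t (c ^ 2)) = 0 := by
  have h1 : Real.sqrt t ≤ c := by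
    have := Real.sqrt_le_sqrt htc
    rwa [Real.sqrt_sq hc.le] at this
  have h2 : min 1 (Real.sqrt t - c) ≤ 0 := le_trans (min_le_right _ _) (by linarith)
  rw [max_eq_left h2, zero_div]

lemma aux_f_cont (c : ℝ) (hc : 0 < c) :
    Continuous (fun t : ℝ => max 0 (min 1 (Real.sqrt t - c)) / Real.sqrt (max t (c ^ 2))) := by
  apply Continuous.div
  · exact (continuous_const.max ((continuous_const.min (Real.continuous_sqrt.sub continuous_const))))
  · exact Real.continuous_sqrt.comp (continuous_id.max continuous_const)
  · intro t
    have h1 : (0:ℝ) < c ^ 2 := by positivity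
    have : 0 < Real.sqrt (max t (c ^ 2)) := Real.sqrt_pos.mpr (lt_of_lt_of_le h1 (le_max_right _ _))
    exact ne_of_gt this

lemma aux_real_facts (c M t : ℝ) (hc : 0 < c) (hM : 0 ≤ M) (hM1 : M - 1 ≤ c)
    (ht : 0 ≤ t) (htM : t ≤ M ^ 2) :
    t * (max 0 (min 1 (Real.sqrt t - c)) / Real.sqrt (max t (c ^ 2))) ^ 2 ≤ 1 ∧
    t * (1 - max 0 (min 1 (Real.sqrt t - c)) / Real.sqrt (max t (c ^ 2))) ^ 2 ≤ c ^ 2 := by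
  by_cases h : t ≤ c ^ 2
  · rw [aux_f_zero c t hc h]
    constructor
    · simpa using mul_nonneg ht (by norm_num : (0:ℝ) ≤ 0) |>.trans (by norm_num)
    · simpa using h
  · push_neg at h
    set s := Real.sqrt t with hs
    have hst : s ^ 2 = t := Real.sq_sqrt ht
    have hsnn : 0 ≤ s := Real.sqrt_nonneg t
    have hcs : c < s := by
      by_contra hcon
      push_neg at hcon
      have := pow_le_pow_left₀ hsnn hcon 2
      linarith
    have hs0 : 0 < s := lt_trans hc hcs
    have hsM : s ≤ M := by
      have := Real.sqrt_le_sqrt htM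
      rwa [Real.sqrt_sq hM] at this
    have hmax : max t (c ^ 2) = t := max_eq_left h.le
    have hnum : max 0 (min 1 (s - c)) = min 1 (s - c) :=
      max_eq_right (le_min (by norm_num) (by linarith))
    have hf : max 0 (min 1 (Real.sqrt t - c)) / Real.sqrt (max t (c ^ 2)) = min 1 (s - c) / s := by
      rw [hmax, hnum]
    rw [hf]
    have hsf : s * (min 1 (s - c) / s) = min 1 (s - c) := mul_div_cancel₀ _ (ne_of_gt hs0)
    have hmin0 : 0 < min 1 (s - c) := lt_min (by norm_num) (by linarith)
    have hmin1 : min 1 (s - c) ≤ 1 := min_le_left _ _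
    constructor
    · have : t * (min 1 (s - c) / s) ^ 2 = (s * (min 1 (s - c) / s)) ^ 2 := by
        rw [mul_pow, hst]
      rw [this, hsf]
      nlinarith
    · have : t * (1 - min 1 (s - c) / s) ^ 2 = (s - s * (min 1 (s - c) / s)) ^ 2 := by
        rw [← hst]; ring
      rw [this, hsf]
      set v := s - min 1 (s - c) with hv
      have hv0 : 0 ≤ v := by
        have : min 1 (s - c) ≤ s - c := min_le_right _ _
        simp only [hv]; linarith
      have hvc : v ≤ c := by
        rcases le_or_gt (s - c) 1 with hcase | hcase
        · have : min 1 (s - c) = s - c := min_eq_right hcase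
          simp [hv, this]
        · have : min 1 (s - c) = 1 := min_eq_left (by linarith)
          simp only [hv, this]; linarith
      nlinarith


/-- For an infinite-dimensional complex Hilbert space `H` and any bounded operator `T` on `H`,
the distance from `T` to the closed unit ball of the compact operators equals
`max (‖T‖ - 1) (d(T, K(H)))`. -/
theorem stmt_0 {H : Type*} [NormedAddCommGroup H] [InnerProductSpace ℂ H] [CompleteSpace H]
    (hH : ¬ FiniteDimensional ℂ H) (T : H →L[ℂ] H) :
    Metric.infDist T {K : H →L[ℂ] H | IsCompactOperator ⇑K ∧ ‖K‖ ≤ 1}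
      = max (‖T‖ - 1) (Metric.infDist T {K : H →L[ℂ] H | IsCompactOperator ⇑K}) := by
  have hnt : Nontrivial H := by
    by_contra h
    have : Subsingleton H := not_nontrivial_iff_subsingleton.mp h
    exact hH inferInstance
  set SB := {K : H →L[ℂ] H | IsCompactOperator ⇑K ∧ ‖K‖ ≤ 1} with hSB
  set SK := {K : H →L[ℂ] H | IsCompactOperator ⇑K} with hSK
  have h0K : (0 : H →L[ℂ] H) ∈ SK := by
    simpa [hSK] using (isCompactOperator_zero : IsCompactOperator (fun _ : H => (0:H)))
  have hSBne : SB.Nonempty := ⟨0, h0K, by simp⟩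
  have hSKne : SK.Nonempty := ⟨0, h0K⟩
  set d := Metric.infDist T SK with hd
  set m := max (‖T‖ - 1) d with hm
  have hd0 : 0 ≤ d := Metric.infDist_nonneg
  have hdm : d ≤ m := le_max_right _ _
  have hTm : ‖T‖ - 1 ≤ m := le_max_left _ _
  apply le_antisymm
  · refine le_of_forall_pos_le_add fun ε hε => ?_
    set c := m + ε with hc
    have hc0 : 0 < c := by
      have : 0 ≤ m := le_trans hd0 hdm
      linarith
    obtain ⟨Cop, hCopK, hCopd⟩ := (Metric.infDist_lt_iff hSKne).mp
      (show Metric.infDist T SK < c by rw [← hd]; linarith)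
    have hCc : ‖T - Cop‖ < c := by rwa [← dist_eq_norm]
    set A : H →L[ℂ] H := star T * T with hA
    set B : H →L[ℂ] H := star (T - Cop) * (T - Cop) with hB
    have hAsa : IsSelfAdjoint A := IsSelfAdjoint.star_mul_self T
    have hBsa : IsSelfAdjoint B := IsSelfAdjoint.star_mul_self _
    have hstarC : IsCompactOperator ⇑(star Cop) := aux_star_compact hCopK
    have hABdiff : A - B = star T * Cop + star Cop * T - star Cop * Cop := by
      rw [hA, hB, star_sub]
      noncomm_ring
    have hABc : IsCompactOperator ⇑(A - B) := by
      rw [hABdiff]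
      exact aux_sub (aux_add (aux_mul_left (star T) hCopK) (aux_mul_right T hstarC))
        (aux_mul_right Cop hstarC)
    have hBnorm : ‖B‖ < c ^ 2 := by
      rw [hB, CStarRing.norm_star_mul_self]
      calc ‖T - Cop‖ * ‖T - Cop‖ < c * c :=
            mul_self_lt_mul_self (norm_nonneg _) hCc
        _ = c ^ 2 := (sq c).symm
    set f : ℝ → ℝ := fun t => max 0 (min 1 (Real.sqrt t - c)) / Real.sqrt (max t (c ^ 2))
      with hfdef
    have hfcont : Continuous f := aux_f_cont c hc0
    have hfB : cfc f B = 0 := by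
      refine aux_vanish B hBsa f fun x hx => ?_
      have hxB : x ≤ ‖B‖ := by
        have := spectrum.norm_le_norm_of_mem hx
        rw [Real.norm_eq_abs] at this
        exact le_trans (le_abs_self x) this
      simp only [hfdef]
      exact aux_f_zero c x hc0 (by linarith)
    set Sf : H →L[ℂ] H := cfc f A with hSf
    have hSfsa : IsSelfAdjoint Sf := cfc_predicate _ _
    have hSfc : IsCompactOperator ⇑Sf := by
      have := aux_cfc_diff_compact hAsa hBsa hABc f hfcont
      rwa [hfB, sub_zero] at this
    set K : H →L[ℂ] H := T * Sf with hKdef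
    have hKc : IsCompactOperator ⇑K := aux_mul_left T hSfc
    have hspec : ∀ x ∈ spectrum ℝ A, 0 ≤ x ∧ x ≤ ‖T‖ ^ 2 := by
      intro x hx
      refine ⟨spectrum_nonneg_of_nonneg (star_mul_self_nonneg T) hx, ?_⟩
      have h1 := spectrum.norm_le_norm_of_mem hx
      rw [Real.norm_eq_abs] at h1
      have h2 : ‖A‖ = ‖T‖ ^ 2 := by rw [hA, CStarRing.norm_star_mul_self, sq]
      calc x ≤ |x| := le_abs_self x
        _ ≤ ‖A‖ := h1
        _ = ‖T‖ ^ 2 := h2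
    have hM1 : ‖T‖ - 1 ≤ c := by linarith
    have hK1 : ‖K‖ ≤ 1 := by
      refine aux_norm_le K zero_le_one ?_
      have e1 : star K * K = Sf * A * Sf := by
        rw [hKdef, star_mul, hSfsa.star_eq, hA]
        simp only [mul_assoc]
      rw [e1, aux_sandwich A hAsa f hfcont, one_pow]
      refine norm_cfc_le zero_le_one fun x hx => ?_
      obtain ⟨hx0, hxM⟩ := hspec x hx
      have hfact := (aux_real_facts c ‖T‖ x hc0 (norm_nonneg T) hM1 hx0 hxM).1
      rw [Real.norm_eq_abs, show f x * x * f x = x * f x ^ 2 by ring,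
        abs_of_nonneg (mul_nonneg hx0 (sq_nonneg _))]
      simpa only [hfdef] using hfact
    have hTK : ‖T - K‖ ≤ c := by
      refine aux_norm_le _ hc0.le ?_
      have e0 : (1 : H →L[ℂ] H) - Sf = cfc (fun t : ℝ => 1 - f t) A := by
        rw [cfc_sub (fun _ : ℝ => (1:ℝ)) f A (by fun_prop) hfcont.continuousOn, cfc_const_one ℝ A]
      have e1 : T - K = T * ((1 : H →L[ℂ] H) - Sf) := by
        rw [hKdef, mul_sub, mul_one]
      have hgsa : IsSelfAdjoint ((1 : H →L[ℂ] H) - Sf) := by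
        rw [e0]; exact cfc_predicate _ _
      have e2 : star (T - K) * (T - K)
          = ((1 : H →L[ℂ] H) - Sf) * A * ((1 : H →L[ℂ] H) - Sf) := by
        rw [e1, star_mul, hgsa.star_eq, hA]
        simp only [mul_assoc]
      rw [e2, e0, aux_sandwich A hAsa _ (by fun_prop)]
      refine norm_cfc_le (by positivity) fun x hx => ?_
      obtain ⟨hx0, hxM⟩ := hspec x hx
      have hfact := (aux_real_facts c ‖T‖ x hc0 (norm_nonneg T) hM1 hx0 hxM).2
      rw [Real.norm_eq_abs, show (1 - f x) * x * (1 - f x) = x * (1 - f x) ^ 2 by ring,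
        abs_of_nonneg (mul_nonneg hx0 (sq_nonneg _))]
      simpa only [hfdef] using hfact
    calc Metric.infDist T SB ≤ dist T K := Metric.infDist_le_dist_of_mem ⟨hKc, hK1⟩
      _ = ‖T - K‖ := dist_eq_norm _ _
      _ ≤ c := hTK
      _ = m + ε := hc
  · refine max_le ?_ ?_
    · by_contra hcon
      push_neg at hcon
      obtain ⟨y, hy, hdy⟩ := (Metric.infDist_lt_iff hSBne).mp hcon
      have h1 : ‖y‖ ≤ 1 := hy.2
      rw [dist_eq_norm] at hdy
      have := norm_sub_norm_le T y
      linarith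
    · exact Metric.infDist_le_infDist_of_subset (fun K hK => hK.1) hSBne
end

section
/- Let H be an infinite-dimensional complex Hilbert space. Then K(H) is ball proximinal in B(H): for every bounded linear operator T on H there exists a compact operator K with ‖K‖ ≤ 1 such that ‖T − K‖ = d(T, B_{K(H)}). -/
open scoped InnerProductSpace
open Metric ContinuousLinearMap Filter Topology

section BallProxAux

variable {H : Type*} [NormedAddCommGroup H] [InnerProductSpace ℂ H] [CompleteSpace H]

set_option linter.unusedSectionVars false

lemma aux_selfadj_inner (B : H →L[ℂ] H) (hB : IsSelfAdjoint B) (z x : H) :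
    ⟪B z, x⟫_ℂ = ⟪z, B x⟫_ℂ := by
  conv_lhs => rw [← hB.star_eq, star_eq_adjoint]
  exact adjoint_inner_left B x z

lemma aux_inner (T B : H →L[ℂ] H) (hB : IsSelfAdjoint B) (x : H) :
    RCLike.re ⟪(B * (star T * T) * B) x, x⟫_ℂ = ‖T (B x)‖ ^ 2 := by
  have h1 : (B * (star T * T) * B) x = B ((star T) (T (B x))) := rfl
  rw [h1, aux_selfadj_inner B hB, star_eq_adjoint, adjoint_inner_left]
  rw [inner_self_eq_norm_sq]

lemma aux_inner2 (B : H →L[ℂ] H) (hB : IsSelfAdjoint B) (x : H) :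
    RCLike.re ⟪(B * B) x, x⟫_ℂ = ‖B x‖ ^ 2 := by
  have h1 : (B * B) x = B (B x) := rfl
  rw [h1, aux_selfadj_inner B hB, inner_self_eq_norm_sq]

lemma aux_re_inner_smul (c : ℝ) (y x : H) :
    RCLike.re ⟪(c • y : H), x⟫_ℂ = c * RCLike.re ⟪y, x⟫_ℂ := by
  have h : (c • y : H) = ((c : ℂ) • y) := by norm_cast
  rw [h, inner_smul_left, Complex.conj_ofReal, RCLike.mul_re]
  simp [Complex.ofReal_re, Complex.ofReal_im]


lemma aux_small {C : H →L[ℂ] H} (hC : IsCompactOperator ⇑C)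
    {e : ℕ → H} (he : Orthonormal ℂ e) {ε : ℝ} (hε : 0 < ε) : ∃ n, ‖C (e n)‖ < ε := by
  by_contra h
  push_neg at h
  have hC' : IsCompactOperator ⇑(C : H →ₗ[ℂ] H) := by simpa using hC
  have hK : IsCompact (closure (⇑(C : H →ₗ[ℂ] H) '' Metric.closedBall 0 1)) :=
    hC'.isCompact_closure_image_closedBall 1
  have hmem : ∀ n, C (e n) ∈ closure (⇑(C : H →ₗ[ℂ] H) '' Metric.closedBall 0 1) := by
    intro n
    apply subset_closure
    exact ⟨e n, by simp [he.1 n, mem_closedBall, dist_zero_right, (he.1 n).le], rfl⟩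
  obtain ⟨z, hz, φ, hφ, hlim⟩ := hK.tendsto_subseq hmem
  -- weak null
  have hweak : ∀ x : H, Tendsto (fun n => ⟪x, e n⟫_ℂ) atTop (𝓝 0) := by
    intro x
    have hsum : Summable fun n => ‖⟪x, e n⟫_ℂ‖ ^ 2 := by
      simpa [norm_inner_symm] using he.inner_products_summable x
    have h0 : Tendsto (fun n => ‖⟪x, e n⟫_ℂ‖ ^ 2) atTop (𝓝 0) := hsum.tendsto_atTop_zero
    rw [tendsto_zero_iff_norm_tendsto_zero]
    have := (h0.sqrt)
    simpa [Real.sqrt_sq (norm_nonneg _)] using this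
  have hz0 : z = 0 := by
    have hweak2 : ∀ x : H, Tendsto (fun k => ⟪x, C (e (φ k))⟫_ℂ) atTop (𝓝 0) := by
      intro x
      have : (fun n => ⟪x, C (e n)⟫_ℂ) = fun n => ⟪adjoint C x, e n⟫_ℂ := by
        ext n; rw [adjoint_inner_left]
      have h2 : Tendsto (fun n => ⟪x, C (e n)⟫_ℂ) atTop (𝓝 0) := by
        rw [this]; exact hweak _
      exact h2.comp hφ.tendsto_atTop
    have hlim2 : Tendsto (fun k => ⟪z, C (e (φ k))⟫_ℂ) atTop (𝓝 (⟪z, z⟫_ℂ)) :=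
      (continuous_const.inner continuous_id).continuousAt.tendsto.comp hlim
    have := tendsto_nhds_unique hlim2 (hweak2 z)
    exact inner_self_eq_zero.mp this
  have : ε ≤ ‖z‖ := ge_of_tendsto' (hlim.norm) (fun k => h (φ k))
  rw [hz0, norm_zero] at this
  exact absurd this (not_le.mpr hε)

lemma aux_fr (F : H →L[ℂ] H) (h : FiniteDimensional ℂ (LinearMap.range (F : H →ₗ[ℂ] H))) :
    IsCompactOperator ⇑F := by
  rw [isCompactOperator_iff_exists_mem_nhds_image_subset_compact]
  refine ⟨Metric.closedBall 0 1, Metric.closedBall_mem_nhds 0 one_pos,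
    Subtype.val '' (Metric.closedBall (0 : LinearMap.range (F : H →ₗ[ℂ] H)) ‖F‖), ?_, ?_⟩
  · have : ProperSpace (LinearMap.range (F : H →ₗ[ℂ] H)) := FiniteDimensional.proper ℂ _
    exact (isCompact_closedBall _ _).image continuous_subtype_val
  · rintro y ⟨x, hx, rfl⟩
    refine ⟨⟨F x, LinearMap.mem_range_self (F : H →ₗ[ℂ] H) x⟩, ?_, rfl⟩
    rw [mem_closedBall, dist_zero_right]
    rw [mem_closedBall, dist_zero_right] at hx
    calc ‖(⟨F x, _⟩ : LinearMap.range (F : H →ₗ[ℂ] H))‖ = ‖F x‖ := rfl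
      _ ≤ ‖F‖ * ‖x‖ := F.le_opNorm x
      _ ≤ ‖F‖ * 1 := by gcongr
      _ = ‖F‖ := mul_one _

lemma aux_opnorm (T : H →L[ℂ] H) (h : ℝ → ℝ) (hh : Continuous h) {m : ℝ} (hm : 0 ≤ m)
    (hbound : ∀ s ∈ spectrum ℝ (star T * T), s * h s ^ 2 ≤ m ^ 2) :
    ‖T * cfc h (star T * T)‖ ≤ m := by
  set A := star T * T with hAdef
  have hA : IsSelfAdjoint A := IsSelfAdjoint.star_mul_self T
  set B := cfc h A with hBdef
  have hB : IsSelfAdjoint B := cfc_predicate h A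
  have e2 : B * A * B = cfc (fun s => h s * s * h s) A := by
    rw [hBdef, cfc_mul (fun s => h s * s) h A (by fun_prop) (by fun_prop),
      cfc_mul h (fun s : ℝ => s) A (by fun_prop) (by fun_prop), cfc_id' ℝ A]
  have epos : 0 ≤ cfc (fun s => m ^ 2 - h s * s * h s) A :=
    cfc_nonneg fun s hs => by nlinarith [hbound s hs, sq_nonneg (h s)]
  have esplit : cfc (fun s => m ^ 2 - h s * s * h s) A
      = algebraMap ℝ (H →L[ℂ] H) (m ^ 2) - B * A * B := by
    rw [cfc_sub (fun _ => m ^ 2) (fun s => h s * s * h s) A (by fun_prop) (by fun_prop),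
      cfc_const (m ^ 2) A, e2]
  refine ContinuousLinearMap.opNorm_le_bound _ hm fun x => ?_
  have h1 : ‖(T * B) x‖ ^ 2 = RCLike.re ⟪(B * A * B) x, x⟫_ℂ := by
    have := aux_inner T B hB x
    rw [← hAdef] at this
    rw [ContinuousLinearMap.mul_apply]
    exact this.symm
  have h3 : 0 ≤ RCLike.re ⟪(algebraMap ℝ (H →L[ℂ] H) (m ^ 2) - B * A * B) x, x⟫_ℂ := by
    rw [← esplit]
    exact ((ContinuousLinearMap.nonneg_iff_isPositive _).mp epos).re_inner_nonneg_left x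
  have h4 : RCLike.re ⟪(algebraMap ℝ (H →L[ℂ] H) (m ^ 2) - B * A * B) x, x⟫_ℂ
      = m ^ 2 * ‖x‖ ^ 2 - RCLike.re ⟪(B * A * B) x, x⟫_ℂ := by
    rw [ContinuousLinearMap.sub_apply, inner_sub_left, map_sub]
    congr 1
    have e6 : (algebraMap ℝ (H →L[ℂ] H) (m ^ 2)) x = ((m ^ 2 : ℝ) : ℂ) • x := by
      rw [Algebra.algebraMap_eq_smul_one]
      rw [ContinuousLinearMap.smul_apply, ContinuousLinearMap.one_apply]
      norm_cast
    rw [e6, inner_smul_left, Complex.conj_ofReal]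
    have him : (⟪x, x⟫_ℂ).im = 0 := inner_self_im (𝕜 := ℂ) x
    have hre : (⟪x, x⟫_ℂ).re = ‖x‖ ^ 2 := inner_self_eq_norm_sq (𝕜 := ℂ) x
    rw [RCLike.mul_re]
    simp only [Complex.ofReal_re, Complex.ofReal_im, RCLike.re_to_complex, RCLike.im_to_complex] at *
    rw [him, hre]
    ring
  have key : ‖(T * B) x‖ ^ 2 ≤ m ^ 2 * ‖x‖ ^ 2 := by
    rw [h1]; linarith
  nlinarith [norm_nonneg ((T * B) x), norm_nonneg x, mul_nonneg hm (norm_nonneg x)]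

lemma aux_orthonormal_seq (V : Submodule ℂ H) (hV : ¬ FiniteDimensional ℂ V) :
    ∃ e : ℕ → H, Orthonormal ℂ e ∧ ∀ n, e n ∈ V.topologicalClosure := by
  set W := V.topologicalClosure with hW
  have hWc : CompleteSpace W := (V.isClosed_topologicalClosure).completeSpace_coe
  obtain ⟨w, b, hb⟩ := exists_hilbertBasis ℂ W
  have hwinf : w.Infinite := by
    by_contra hfin
    rw [Set.not_infinite] at hfin
    have hfr : (Set.range ⇑b).Finite := by rw [hb, Subtype.range_coe]; exact hfin
    have h1 : FiniteDimensional ℂ (Submodule.span ℂ (Set.range ⇑b)) :=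
      FiniteDimensional.span_of_finite ℂ hfr
    have hclosed : (Submodule.span ℂ (Set.range ⇑b)).topologicalClosure
        = Submodule.span ℂ (Set.range ⇑b) :=
      (Submodule.closed_of_finiteDimensional _).submodule_topologicalClosure_eq
    have hsp := b.dense_span
    rw [hclosed] at hsp
    rw [hsp] at h1
    have h2 : FiniteDimensional ℂ W := Module.Finite.equiv Submodule.topEquiv
    exact hV (Submodule.finiteDimensional_of_le (Submodule.le_topologicalClosure V))
  let emb := hwinf.natEmbedding
  refine ⟨fun n => W.subtypeₗᵢ (b (emb n)), ?_, fun n => (b (emb n) : W).2⟩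
  exact ((b.orthonormal.comp _ emb.injective).comp_linearIsometry _)

lemma aux_core (T C : H →L[ℂ] H) (hC : IsCompactOperator ⇑C) (f : ℝ → ℝ) (hf : Continuous f)
    {c ε : ℝ} (hε : 0 < ε) (hfc : ∀ s, s ≤ c → f s = 0) (hlt : (‖T - C‖ + ε) ^ 2 < c) :
    FiniteDimensional ℂ (LinearMap.range ((cfc f (star T * T) : H →L[ℂ] H) : H →ₗ[ℂ] H)) := by
  set A := star T * T with hAdef
  have hA : IsSelfAdjoint A := .star_mul_self T
  set B := cfc f A with hBdef
  have hB : IsSelfAdjoint B := cfc_predicate f A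
  by_contra hfd
  have hY : ∀ y ∈ LinearMap.range (B : H →ₗ[ℂ] H), c * ‖y‖ ^ 2 ≤ ‖T y‖ ^ 2 := by
    rintro y ⟨x, rfl⟩
    have e2 : B * A * B = cfc (fun s => f s * s * f s) A := by
      rw [hBdef, cfc_mul (fun s => f s * s) f A (by fun_prop) (by fun_prop),
        cfc_mul f (fun s : ℝ => s) A (by fun_prop) (by fun_prop), cfc_id' ℝ A]
    have e5 : B * B = cfc (fun s => f s * f s) A :=
      (cfc_mul f f A (by fun_prop) (by fun_prop)).symm
    have epos : 0 ≤ cfc (fun s => f s * s * f s - c * (f s * f s)) A := by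
      refine cfc_nonneg fun s _ => ?_
      rcases le_or_gt s c with hsc | hsc
      · rw [hfc s hsc]; ring_nf; exact le_refl 0
      · nlinarith [sq_nonneg (f s)]
    have esplit : cfc (fun s => f s * s * f s - c * (f s * f s)) A
        = B * A * B - c • (B * B) := by
      rw [cfc_sub (fun s => f s * s * f s) (fun s => c * (f s * f s)) A (by fun_prop) (by fun_prop),
        cfc_const_mul c (fun s => f s * f s) A (by fun_prop), e2, e5]
    have h3 : 0 ≤ RCLike.re ⟪(B * A * B - c • (B * B)) x, x⟫_ℂ := by
      rw [← esplit]
      exact ((ContinuousLinearMap.nonneg_iff_isPositive _).mp epos).re_inner_nonneg_left x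
    have t1 : RCLike.re ⟪(B * A * B) x, x⟫_ℂ = ‖T (B x)‖ ^ 2 := by
      rw [hAdef]
      exact aux_inner T B hB x
    have t2 : RCLike.re ⟪(c • (B * B)) x, x⟫_ℂ = c * ‖B x‖ ^ 2 := by
      rw [ContinuousLinearMap.smul_apply, aux_re_inner_smul, aux_inner2 B hB x]
    rw [ContinuousLinearMap.sub_apply, inner_sub_left, map_sub, t1, t2] at h3
    exact (by linarith : c * ‖B x‖ ^ 2 ≤ ‖T (B x)‖ ^ 2)
  have hcl : ∀ y ∈ (LinearMap.range (B : H →ₗ[ℂ] H)).topologicalClosure, c * ‖y‖ ^ 2 ≤ ‖T y‖ ^ 2 := by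
    intro y hy
    have hsub : ((LinearMap.range (B : H →ₗ[ℂ] H)).topologicalClosure : Set H)
        ⊆ {y : H | c * ‖y‖ ^ 2 ≤ ‖T y‖ ^ 2} := by
      rw [Submodule.topologicalClosure_coe]
      refine closure_minimal (fun z hz => hY z hz) ?_
      exact isClosed_le (by fun_prop) (by fun_prop)
    exact hsub hy
  obtain ⟨e, he, hem⟩ := aux_orthonormal_seq (LinearMap.range (B : H →ₗ[ℂ] H)) hfd
  obtain ⟨n, hn⟩ := aux_small hC he hε
  have h1 : c ≤ ‖T (e n)‖ ^ 2 := by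
    have h := hcl (e n) (hem n)
    rw [he.1 n] at h
    simpa using h
  have h2 : ‖T (e n)‖ ≤ ‖T - C‖ + ε := by
    have heq : T (e n) = (T - C) (e n) + C (e n) := by simp
    calc ‖T (e n)‖ ≤ ‖(T - C) (e n)‖ + ‖C (e n)‖ := by rw [heq]; exact norm_add_le _ _
      _ ≤ ‖T - C‖ * ‖e n‖ + ε := add_le_add ((T - C).le_opNorm _) hn.le
      _ = ‖T - C‖ + ε := by rw [he.1 n, mul_one]
  have h3 : ‖T (e n)‖ ^ 2 ≤ (‖T - C‖ + ε) ^ 2 := by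
    have := pow_le_pow_left₀ (norm_nonneg (T (e n))) h2 2
    exact this
  linarith

end BallProxAux

/-- For an infinite-dimensional complex Hilbert space `H`, the compact operators are ball
proximinal in `B(H)`: every bounded operator `T` admits a best approximation from the closed
unit ball of the compact operators. -/
theorem stmt_1 {H : Type*} [NormedAddCommGroup H] [InnerProductSpace ℂ H] [CompleteSpace H]
    (hH : ¬ FiniteDimensional ℂ H) (T : H →L[ℂ] H) :
    ∃ K : H →L[ℂ] H, IsCompactOperator ⇑K ∧ ‖K‖ ≤ 1 ∧
      ‖T - K‖ = Metric.infDist T {K' : H →L[ℂ] H | IsCompactOperator ⇑K' ∧ ‖K'‖ ≤ 1} := by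
  classical
  set S : Set (H →L[ℂ] H) := {K' | IsCompactOperator ⇑K' ∧ ‖K'‖ ≤ 1} with hSdef
  have hS0 : (0 : H →L[ℂ] H) ∈ S := ⟨isCompactOperator_zero, by simp⟩
  have hSne : S.Nonempty := ⟨0, hS0⟩
  set a := Metric.infDist T S with hadef
  have ha0 : 0 ≤ a := Metric.infDist_nonneg
  have haT : ‖T‖ - 1 ≤ a := by
    by_contra hcon
    push_neg at hcon
    obtain ⟨K', hK', hd⟩ := (Metric.infDist_lt_iff hSne).mp hcon
    rw [dist_eq_norm] at hd
    have h1 : ‖T‖ - ‖K'‖ ≤ ‖T - K'‖ := norm_sub_norm_le T K'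
    linarith [hK'.2]
  have hSclosed : IsClosed S := by
    have h1 : IsClosed {K' : H →L[ℂ] H | IsCompactOperator ⇑K'} :=
      isClosed_setOf_isCompactOperator
    have h2 : IsClosed {K' : H →L[ℂ] H | ‖K'‖ ≤ 1} :=
      isClosed_le continuous_norm continuous_const
    rw [hSdef, Set.setOf_and]
    exact h1.inter h2
  rcases eq_or_lt_of_le ha0 with haz | hapos
  · have hT : T ∈ S := (hSclosed.mem_iff_infDist_zero hSne).mpr haz.symm
    exact ⟨T, hT.1, hT.2, by rw [sub_self, norm_zero]; exact haz⟩
  · set A := star T * T with hAdef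
    have hA : IsSelfAdjoint A := .star_mul_self T
    -- spectrum facts
    have hspec : ∀ s ∈ spectrum ℝ A, 0 ≤ s ∧ s ≤ ‖T‖ ^ 2 := by
      intro s hs
      constructor
      · exact spectrum_nonneg_of_nonneg (star_mul_self_nonneg T) hs
      · have h1 : ‖s‖ ≤ ‖A‖ * ‖(1 : H →L[ℂ] H)‖ := spectrum.norm_le_norm_mul_of_mem hs
        have h2 : ‖A‖ = ‖T‖ * ‖T‖ := CStarRing.norm_star_mul_self
        have h3 : ‖(1 : H →L[ℂ] H)‖ ≤ 1 := by
          rw [ContinuousLinearMap.one_def]; exact ContinuousLinearMap.norm_id_le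
        rw [Real.norm_eq_abs] at h1
        nlinarith [le_abs_self s, norm_nonneg A]
    -- the function g
    set g : ℝ → ℝ := fun s => 1 - a / Real.sqrt (max s (a ^ 2)) with hgdef
    have hsqrt_pos : ∀ s : ℝ, 0 < Real.sqrt (max s (a ^ 2)) := fun s =>
      Real.sqrt_pos.mpr (lt_of_lt_of_le (by positivity) (le_max_right _ _))
    have hsqrt_ge : ∀ s : ℝ, a ≤ Real.sqrt (max s (a ^ 2)) := by
      intro s
      have h1 : Real.sqrt (a ^ 2) ≤ Real.sqrt (max s (a ^ 2)) :=
        Real.sqrt_le_sqrt (le_max_right _ _)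
      rwa [Real.sqrt_sq ha0] at h1
    have hgcont : Continuous g := by
      apply continuous_const.sub
      apply continuous_const.div
      · exact Real.continuous_sqrt.comp (continuous_id.max continuous_const)
      · exact fun s => (hsqrt_pos s).ne'
    have hg0 : ∀ s, s ≤ a ^ 2 → g s = 0 := by
      intro s hs
      have h1 : max s (a ^ 2) = a ^ 2 := max_eq_right hs
      simp only [hgdef, h1, Real.sqrt_sq ha0, div_self hapos.ne', sub_self]
    have hg01 : ∀ s, 0 ≤ g s ∧ g s ≤ 1 := by
      intro s
      have h1 : a / Real.sqrt (max s (a ^ 2)) ≤ 1 := (div_le_one (hsqrt_pos s)).mpr (hsqrt_ge s)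
      have h2 : 0 ≤ a / Real.sqrt (max s (a ^ 2)) := by positivity
      constructor
      · simp only [hgdef]; linarith
      · simp only [hgdef]; linarith
    have hgmono : Monotone g := by
      intro s t hst
      simp only [hgdef]
      have h1 : Real.sqrt (max s (a ^ 2)) ≤ Real.sqrt (max t (a ^ 2)) :=
        Real.sqrt_le_sqrt (max_le_max hst le_rfl)
      have h2 := hsqrt_pos s
      gcongr
    set K : H →L[ℂ] H := T * cfc g A with hKdef
    -- (I) norm bound ‖T - K‖ ≤ a
    have hTK : ‖T - K‖ ≤ a := by
      have e0 : cfc (fun s => 1 - g s) A = 1 - cfc g A := by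
        rw [cfc_sub (fun _ : ℝ => (1 : ℝ)) g A (by fun_prop) hgcont.continuousOn,
          cfc_const (1 : ℝ) A, map_one]
      have e1 : T - K = T * cfc (fun s => 1 - g s) A := by
        rw [e0, mul_sub, mul_one, hKdef]
      rw [e1, hAdef]
      apply aux_opnorm T _ (by fun_prop) ha0
      intro s hs
      rw [← hAdef] at hs
      obtain ⟨hs0, _⟩ := hspec s hs
      have e2 : 1 - g s = a / Real.sqrt (max s (a ^ 2)) := by simp [hgdef]
      rw [e2, div_pow, Real.sq_sqrt (le_trans (sq_nonneg a) (le_max_right _ _))]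
      calc s * (a ^ 2 / max s (a ^ 2)) ≤ max s (a ^ 2) * (a ^ 2 / max s (a ^ 2)) := by
            apply mul_le_mul_of_nonneg_right (le_max_left _ _)
            positivity
        _ = a ^ 2 := by
            field_simp
    -- (II) ‖K‖ ≤ 1
    have hK1 : ‖K‖ ≤ 1 := by
      rw [hKdef, hAdef]
      apply aux_opnorm T g hgcont zero_le_one
      intro s hs
      rw [← hAdef] at hs
      obtain ⟨hs0, hs1⟩ := hspec s hs
      rcases le_or_gt s (a ^ 2) with hsc | hsc
      · rw [hg0 s hsc]; norm_num
      · have hmax : max s (a ^ 2) = s := max_eq_left hsc.le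
        have hrs : Real.sqrt s ^ 2 = s := Real.sq_sqrt hs0
        have hspos : (0 : ℝ) < s := lt_of_le_of_lt (sq_nonneg a) hsc
        have hsqrtpos : 0 < Real.sqrt s := Real.sqrt_pos.mpr hspos
        have hgs : g s = (Real.sqrt s - a) / Real.sqrt s := by
          simp only [hgdef, hmax]
          field_simp
        have hcalc : s * g s ^ 2 = (Real.sqrt s - a) ^ 2 := by
          rw [hgs, div_pow, ← hrs]
          field_simp
          rw [Real.sqrt_sq hsqrtpos.le]
        rw [hcalc]
        have hlo : a ≤ Real.sqrt s := by
          have := Real.sqrt_le_sqrt hsc.le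
          rwa [Real.sqrt_sq ha0] at this
        have hhi : Real.sqrt s ≤ ‖T‖ := by
          have := Real.sqrt_le_sqrt hs1
          rwa [Real.sqrt_sq (norm_nonneg T)] at this
        nlinarith
    -- (III) K is compact
    have hgA : IsCompactOperator ⇑(cfc g A) := by
      have hcl : IsClosed {F : H →L[ℂ] H | IsCompactOperator ⇑F} :=
        isClosed_setOf_isCompactOperator
      have hmem : cfc g A ∈ closure {F : H →L[ℂ] H | IsCompactOperator ⇑F} := by
        rw [Metric.mem_closure_iff]
        intro ε' hε'
        -- find δ > 0 with g (a^2 + 2δ) < ε'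
        have hc0 : Continuous (fun d : ℝ => g (a ^ 2 + 2 * d)) := by fun_prop
        have hval : g (a ^ 2 + 2 * 0) = 0 := by rw [mul_zero, add_zero]; exact hg0 _ le_rfl
        have htend : Tendsto (fun d : ℝ => g (a ^ 2 + 2 * d)) (𝓝 0) (𝓝 0) := by
          have := hc0.continuousAt (x := 0)
          rwa [ContinuousAt, hval] at this
        have hev : ∀ᶠ d in 𝓝 (0 : ℝ), g (a ^ 2 + 2 * d) < ε' :=
          htend.eventually_lt_const hε'
        obtain ⟨δ, hδsm, hδpos⟩ :=
          ((hev.filter_mono (nhdsWithin_le_nhds (s := Set.Ioi (0 : ℝ)))).and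
            self_mem_nhdsWithin).exists
        -- ramp function
        set r : ℝ → ℝ := fun s => min 1 (max 0 ((s - (a ^ 2 + δ)) / δ)) with hrdef
        have hrcont : Continuous r := by fun_prop
        have hr0 : ∀ s, s ≤ a ^ 2 + δ → r s = 0 := by
          intro s hs
          have h1 : (s - (a ^ 2 + δ)) / δ ≤ 0 := div_nonpos_of_nonpos_of_nonneg (by linarith) hδpos.le
          simp only [hrdef]
          rw [max_eq_left h1, min_eq_right zero_le_one]
        have hr1 : ∀ s, a ^ 2 + 2 * δ ≤ s → r s = 1 := by
          intro s hs
          have h1 : (1 : ℝ) ≤ (s - (a ^ 2 + δ)) / δ := by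
            rw [le_div_iff₀ hδpos]; linarith
          simp only [hrdef]
          rw [max_eq_right (le_trans zero_le_one h1), min_eq_left h1]
        have hr01 : ∀ s, 0 ≤ r s ∧ r s ≤ 1 := fun s =>
          ⟨le_min zero_le_one (le_max_left _ _), min_le_left _ _⟩
        -- choose ε₀ and a compact K' close to T
        set ε₀ : ℝ := min 1 (δ / (9 * (a + 1))) with hε₀def
        have hε₀pos : 0 < ε₀ := lt_min one_pos (by positivity)
        have hlta : Metric.infDist T S < a + ε₀ := by rw [← hadef]; linarith
        obtain ⟨K', hK'S, hK'd⟩ := (Metric.infDist_lt_iff hSne).mp hlta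
        rw [dist_eq_norm] at hK'd
        have hsq : (‖T - K'‖ + ε₀) ^ 2 < a ^ 2 + δ := by
          have h1 : ε₀ ≤ 1 := min_le_left _ _
          have h2 : ε₀ ≤ δ / (9 * (a + 1)) := min_le_right _ _
          have h3 : ε₀ * (9 * (a + 1)) ≤ δ := (le_div_iff₀ (by positivity)).mp h2
          nlinarith [norm_nonneg (T - K'), hε₀pos, ha0]
        -- the finite-rank piece
        have hfd : FiniteDimensional ℂ (LinearMap.range ((cfc (fun s => g s * r s) A : H →L[ℂ] H) : H →ₗ[ℂ] H)) := by
          rw [hAdef]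
          exact aux_core T K' hK'S.1 _ (by fun_prop) hε₀pos
            (fun s hs => by rw [hr0 s hs, mul_zero]) hsq
        refine ⟨cfc (fun s => g s * r s) A, aux_fr _ hfd, ?_⟩
        rw [dist_eq_norm]
        have hsub : cfc g A - cfc (fun s => g s * r s) A
            = cfc (fun s => g s - g s * r s) A := by
          rw [cfc_sub g (fun s => g s * r s) A hgcont.continuousOn (by fun_prop)]
        rw [hsub]
        have hbound : ∀ s ∈ spectrum ℝ A, ‖g s - g s * r s‖ ≤ g (a ^ 2 + 2 * δ) := by
          intro s _
          rcases le_or_gt (a ^ 2 + 2 * δ) s with hcase | hcase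
          · rw [hr1 s hcase, mul_one, sub_self, norm_zero]
            exact (hg01 _).1
          · have h1 : 0 ≤ g s * (1 - r s) :=
              mul_nonneg (hg01 s).1 (by linarith [(hr01 s).2])
            have h2 : g s - g s * r s = g s * (1 - r s) := by ring
            rw [h2, Real.norm_eq_abs, abs_of_nonneg h1]
            calc g s * (1 - r s) ≤ g s * 1 :=
                mul_le_mul_of_nonneg_left (by linarith [(hr01 s).1]) (hg01 s).1
              _ = g s := mul_one _
              _ ≤ g (a ^ 2 + 2 * δ) := hgmono hcase.le
        exact lt_of_le_of_lt (norm_cfc_le (hg01 _).1 hbound) hδsm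
      rwa [hcl.closure_eq] at hmem
    have hKcompact : IsCompactOperator ⇑K := by
      rw [hKdef]
      exact hgA.continuous_comp T.continuous
    refine ⟨K, hKcompact, hK1, le_antisymm ?_ ?_⟩
    · exact hTK
    · have h1 : Metric.infDist T S ≤ dist T K := Metric.infDist_le_dist_of_mem ⟨hKcompact, hK1⟩
      rwa [dist_eq_norm] at h1
end

section
/- Let H be an infinite-dimensional complex Hilbert space and let V be a bounded linear operator on H that is either an isometry (‖Vx‖ = ‖x‖ for all x ∈ H) or a co-isometry (its Hilbert-space adjoint V* is an isometry). Then for every a ∈ ℂ, d(aV, B_{K(H)}) = d(aV, K(H)). -/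
open ContinuousLinearMap Metric

/-- If `W` is an isometry on an infinite-dimensional Hilbert space and `K` is compact,
then `‖a‖ ≤ ‖a • W - K‖`. -/
lemma key_bound {H : Type*} [NormedAddCommGroup H] [InnerProductSpace ℂ H] [CompleteSpace H]
    (hH : ¬ FiniteDimensional ℂ H) (W : H →L[ℂ] H) (hW : ∀ x : H, ‖W x‖ = ‖x‖)
    (a : ℂ) (K : H →L[ℂ] H) (hK : IsCompactOperator ⇑K) :
    ‖a‖ ≤ ‖a • W - K‖ := by
  by_contra h
  push_neg at h
  set ε : ℝ := ‖a‖ - ‖a • W - K‖ with hε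
  have hεpos : 0 < ε := by linarith
  -- K is bounded below
  have hbelow : ∀ x : H, ε * ‖x‖ ≤ ‖K x‖ := by
    intro x
    have h1 : ‖(a • W - K) x‖ ≤ ‖a • W - K‖ * ‖x‖ := (a • W - K).le_opNorm x
    have h2 : ‖(a • W) x‖ = ‖a‖ * ‖x‖ := by
      simp [norm_smul, hW x]
    have h3 : ‖(a • W) x‖ - ‖K x‖ ≤ ‖(a • W) x - K x‖ := norm_sub_norm_le _ _
    have h4 : (a • W - K) x = (a • W) x - K x := rfl
    rw [h4] at h1
    nlinarith [norm_nonneg x, norm_nonneg (K x)]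
  have hε' : (0 : ℝ) < ε := hεpos
  -- antilipschitz
  have hanti : AntilipschitzWith ⟨ε⁻¹, inv_nonneg.2 hεpos.le⟩ ⇑K := by
    apply K.antilipschitz_of_bound
    intro x
    have := hbelow x
    change ‖x‖ ≤ ε⁻¹ * ‖K x‖
    rw [inv_mul_eq_div, le_div_iff₀ hεpos]
    linarith [mul_comm ε ‖x‖ ▸ this]
  -- closure of image of unit ball is compact
  obtain ⟨C, hC, hCsub⟩ : ∃ C, IsCompact C ∧ ⇑K '' closedBall 0 1 ⊆ C := by
    rcases hK.image_subset_compact_of_bounded (Metric.isBounded_closedBall (x := (0:H)) (r := 1))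
      with ⟨C, hC, hCsub⟩
    exact ⟨C, hC, hCsub⟩
  -- preimage of compact under closed embedding is compact
  have hemb := hanti.isClosedEmbedding K.uniformContinuous
  have hpre : IsCompact (⇑K ⁻¹' C) := hemb.isCompact_preimage hC
  have hball : IsCompact (closedBall (0:H) 1) := by
    apply hpre.of_isClosed_subset isClosed_closedBall
    intro x hx
    exact hCsub ⟨x, hx, rfl⟩
  exact hH (FiniteDimensional.of_isCompact_closedBall₀ ℂ one_pos hball)

/-- For an infinite-dimensional complex Hilbert space `H` and a bounded operator `V` on `H`
that is an isometry or a co-isometry, `d(aV, B_{K(H)}) = d(aV, K(H))` for every `a ∈ ℂ`. -/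
theorem stmt_4 {H : Type*} [NormedAddCommGroup H] [InnerProductSpace ℂ H] [CompleteSpace H]
    (hH : ¬ FiniteDimensional ℂ H) (V : H →L[ℂ] H)
    (hV : (∀ x : H, ‖V x‖ = ‖x‖) ∨ (∀ x : H, ‖(ContinuousLinearMap.adjoint V) x‖ = ‖x‖))
    (a : ℂ) :
    Metric.infDist (a • V) {K : H →L[ℂ] H | IsCompactOperator ⇑K ∧ ‖K‖ ≤ 1}
      = Metric.infDist (a • V) {K : H →L[ℂ] H | IsCompactOperator ⇑K} := by
  have h0mem : (0 : H →L[ℂ] H) ∈ {K : H →L[ℂ] H | IsCompactOperator ⇑K ∧ ‖K‖ ≤ 1} := by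
    refine ⟨?_, by simp⟩
    simpa using isCompactOperator_zero
  -- key bound : for every compact K, ‖a‖ ≤ ‖a•V - K‖
  have hbound : ∀ K : H →L[ℂ] H, IsCompactOperator ⇑K → ‖a‖ ≤ ‖a • V - K‖ := by
    intro K hK
    rcases hV with hiso | hcoiso
    · exact key_bound hH V hiso a K hK
    · -- co-isometry: compose with V*
      have hVV : V ∘L (ContinuousLinearMap.adjoint V) = 1 := by
        have := (ContinuousLinearMap.norm_map_iff_adjoint_comp_self
          (ContinuousLinearMap.adjoint V)).mp hcoiso
        rwa [ContinuousLinearMap.adjoint_adjoint] at this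
      have h1 : ‖a‖ ≤ ‖a • (1 : H →L[ℂ] H) - K ∘L (ContinuousLinearMap.adjoint V)‖ :=
        key_bound hH 1 (by simp) a _ (hK.comp_clm _)
      have h2 : a • (1 : H →L[ℂ] H) - K ∘L (ContinuousLinearMap.adjoint V)
          = (a • V - K) ∘L (ContinuousLinearMap.adjoint V) := by
        rw [ContinuousLinearMap.sub_comp, ContinuousLinearMap.smul_comp, hVV]
      have hadjnorm : ‖ContinuousLinearMap.adjoint V‖ ≤ 1 := by
        apply ContinuousLinearMap.opNorm_le_bound _ zero_le_one
        intro x; rw [hcoiso x, one_mul]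
      calc ‖a‖ ≤ ‖(a • V - K) ∘L (ContinuousLinearMap.adjoint V)‖ := h2 ▸ h1
        _ ≤ ‖a • V - K‖ * ‖ContinuousLinearMap.adjoint V‖ := ContinuousLinearMap.opNorm_comp_le _ _
        _ ≤ ‖a • V - K‖ * 1 := by
            exact mul_le_mul_of_nonneg_left hadjnorm (norm_nonneg _)
        _ = ‖a • V - K‖ := mul_one _
  have hVnorm : ‖a • V‖ ≤ ‖a‖ := by
    rcases hV with hiso | hcoiso
    · rw [norm_smul]
      have : ‖V‖ ≤ 1 := by
        apply ContinuousLinearMap.opNorm_le_bound _ zero_le_one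
        intro x; rw [hiso x, one_mul]
      nlinarith [norm_nonneg a]
    · rw [norm_smul]
      have h1 : ‖ContinuousLinearMap.adjoint V‖ = ‖V‖ :=
        LinearIsometryEquiv.norm_map ContinuousLinearMap.adjoint V
      have : ‖V‖ ≤ 1 := by
        rw [← h1]
        apply ContinuousLinearMap.opNorm_le_bound _ zero_le_one
        intro x; rw [hcoiso x, one_mul]
      nlinarith [norm_nonneg a]
  apply le_antisymm
  · -- infDist ball ≤ ‖a‖ ≤ infDist compacts
    calc Metric.infDist (a • V) {K : H →L[ℂ] H | IsCompactOperator ⇑K ∧ ‖K‖ ≤ 1}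
        ≤ dist (a • V) 0 := Metric.infDist_le_dist_of_mem h0mem
      _ = ‖a • V‖ := by simp
      _ ≤ ‖a‖ := hVnorm
      _ ≤ Metric.infDist (a • V) {K : H →L[ℂ] H | IsCompactOperator ⇑K} := by
          by_contra hlt
          push_neg at hlt
          obtain ⟨K, hK, hd⟩ := (Metric.infDist_lt_iff
            ⟨0, by simpa using isCompactOperator_zero⟩).mp hlt
          rw [dist_eq_norm] at hd
          exact absurd (hbound K hK) (not_le.2 hd)
  · exact Metric.infDist_le_infDist_of_subset (fun K hK => hK.1) ⟨0, h0mem⟩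
end

section
/- Let X be a Banach space such that K(X) is an M-ideal in B(X). Then for every T ∈ B(X), d(T, B_{K(X)}) = max{ ‖T‖ − 1, d(T, K(X)) }. -/
open Metric

set_option maxHeartbeats 1000000 in
/-- If `K(X)` is an `M`-ideal in `B(X)` (witnessed by an `L`-projection `P` on `B(X)*` with
range the annihilator of the compact operators), then for every `T ∈ B(X)`,
`d(T, B_{K(X)}) = max (‖T‖ - 1) (d(T, K(X)))`. -/
theorem stmt_8 {X : Type*} [NormedAddCommGroup X] [NormedSpace ℂ X] [CompleteSpace X]
    (P : ((X →L[ℂ] X) →L[ℂ] ℂ) →L[ℂ] ((X →L[ℂ] X) →L[ℂ] ℂ))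
    (hProj : ∀ φ, P (P φ) = P φ)
    (hL : ∀ φ : (X →L[ℂ] X) →L[ℂ] ℂ, ‖φ‖ = ‖P φ‖ + ‖φ - P φ‖)
    (hRange : Set.range ⇑P
      = {φ : (X →L[ℂ] X) →L[ℂ] ℂ | ∀ K : X →L[ℂ] X, IsCompactOperator ⇑K → φ K = 0})
    (T : X →L[ℂ] X) :
    Metric.infDist T {K : X →L[ℂ] X | IsCompactOperator ⇑K ∧ ‖K‖ ≤ 1}
      = max (‖T‖ - 1) (Metric.infDist T {K : X →L[ℂ] X | IsCompactOperator ⇑K}) := by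
  classical
  set Jset : Set (X →L[ℂ] X) := {K : X →L[ℂ] X | IsCompactOperator ⇑K} with hJset
  set Bset : Set (X →L[ℂ] X) := {K : X →L[ℂ] X | IsCompactOperator ⇑K ∧ ‖K‖ ≤ 1} with hBset
  have h0J : (0 : X →L[ℂ] X) ∈ Jset := by
    simpa [hJset] using (isCompactOperator_zero (M₁ := X) (M₂ := X))
  have h0B : (0 : X →L[ℂ] X) ∈ Bset := ⟨h0J, by simp⟩
  have hBne : Bset.Nonempty := ⟨0, h0B⟩
  have hJne : Jset.Nonempty := ⟨0, h0J⟩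
  -- lower bounds
  have h1 : ‖T‖ - 1 ≤ infDist T Bset := by
    by_contra h
    push_neg at h
    obtain ⟨K, hK, hd⟩ := (infDist_lt_iff hBne).1 h
    have : ‖T‖ - ‖K‖ ≤ ‖T - K‖ := norm_sub_norm_le _ _
    rw [dist_eq_norm] at hd
    have := hK.2
    linarith
  have h2 : infDist T Jset ≤ infDist T Bset :=
    infDist_le_infDist_of_subset (fun K hK => hK.1) hBne
  refine le_antisymm ?_ (max_le h1 h2)
  -- upper bound
  set M : ℝ := max (‖T‖ - 1) (infDist T Jset) with hM
  have hM0 : 0 ≤ M := le_max_of_le_right infDist_nonneg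
  by_contra hcon
  push_neg at hcon
  set L : ℝ := infDist T Bset with hLdef
  set r' : ℝ := (M + L) / 2 with hr'
  set r'' : ℝ := (M + r') / 2 with hr''
  have hr'L : r' < L := by simp only [hr']; linarith
  have hMr'' : M < r'' := by simp only [hr'', hr']; linarith
  have hr''r' : r'' < r' := by simp only [hr'', hr']; linarith
  have hr''pos : 0 < r'' := lt_of_le_of_lt hM0 hMr''
  -- separation
  have hdisj : Disjoint (ball T r') Bset := by
    rw [Set.disjoint_left]
    intro a ha haB
    have h1 : L ≤ dist T a := infDist_le_dist_of_mem haB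
    rw [mem_ball, dist_comm] at ha
    linarith
  have hBconv : Convex ℝ Bset := by
    intro K₁ hK₁ K₂ hK₂ a b ha hb hab
    constructor
    · have h₁ : IsCompactOperator ⇑(a • K₁) := by
        have he : ⇑(a • K₁) = a • ⇑K₁ := by ext x; simp
        rw [he]; exact hK₁.1.smul a
      have h₂ : IsCompactOperator ⇑(b • K₂) := by
        have he : ⇑(b • K₂) = b • ⇑K₂ := by ext x; simp
        rw [he]; exact hK₂.1.smul b
      have := h₁.add h₂
      have he : ⇑(a • K₁ + b • K₂) = ⇑(a • K₁) + ⇑(b • K₂) := by ext x; simp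
      rwa [he]
    · calc ‖a • K₁ + b • K₂‖ ≤ ‖a • K₁‖ + ‖b • K₂‖ := norm_add_le _ _
        _ = a * ‖K₁‖ + b * ‖K₂‖ := by
            rw [norm_smul a K₁, norm_smul b K₂, Real.norm_eq_abs, Real.norm_eq_abs,
              abs_of_nonneg ha, abs_of_nonneg hb]
        _ ≤ a * 1 + b * 1 := by
            gcongr
            exacts [hK₁.2, hK₂.2]
        _ = 1 := by linarith
  obtain ⟨g, s, hgs, hsg⟩ :=
    geometric_hahn_banach_open (convex_ball T r') isOpen_ball hBconv hdisj
  have hgT : g T < s := hgs T (mem_ball_self (lt_of_le_of_lt hr''pos.le (by linarith)))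
  have hs0 : s ≤ 0 := by simpa using hsg 0 h0B
  -- norm bound on g
  have hgbound : ∀ x, |g x| ≤ ((s - g T) / r'') * ‖x‖ := by
    intro x
    rcases eq_or_ne x 0 with rfl | hx
    · simp
    have hxn : (0 : ℝ) < ‖x‖ := norm_pos_iff.2 hx
    set y : X →L[ℂ] X := (r'' / ‖x‖) • x with hy
    have hyn : ‖y‖ = r'' := by
      rw [hy, norm_smul (r'' / ‖x‖) x, Real.norm_eq_abs, abs_of_pos (div_pos hr''pos hxn),
        div_mul_cancel₀ _ hxn.ne']
    have hmem : ∀ z : X →L[ℂ] X, ‖z‖ = r'' → T + z ∈ ball T r' := by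
      intro z hz
      rw [mem_ball, dist_comm, dist_eq_norm]
      simpa [hz] using hr''r'
    have h₁ : g T + g y < s := by
      have := hgs (T + y) (hmem y hyn)
      rwa [map_add] at this
    have h₂ : g T - g y < s := by
      have := hgs (T + (-y)) (hmem (-y) (by rw [norm_neg, hyn]))
      rwa [map_add, map_neg, ← sub_eq_add_neg] at this
    have hgy : |g y| ≤ s - g T := abs_le.2 ⟨by linarith, by linarith⟩
    have hgyx : g y = (r'' / ‖x‖) * g x := by rw [hy, map_smul]; rfl
    rw [hgyx, abs_mul, abs_of_pos (div_pos hr''pos hxn)] at hgy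
    rw [div_mul_eq_mul_div, le_div_iff₀ hr''pos]
    calc |g x| * r'' = r'' / ‖x‖ * |g x| * ‖x‖ := by field_simp
      _ ≤ (s - g T) * ‖x‖ := by
          apply mul_le_mul_of_nonneg_right hgy hxn.le
  have hgnorm : ‖g‖ ≤ (s - g T) / r'' :=
    ContinuousLinearMap.opNorm_le_bound _
      (div_nonneg (by linarith) hr''pos.le) (fun x => by simpa using hgbound x)
  have hgpos : 0 < ‖g‖ := by
    rcases (norm_nonneg g).lt_or_eq with h | h
    · exact h
    · exfalso
      have : g = 0 := g.opNorm_zero_iff.mp h.symm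
      rw [this] at hgT
      simp at hgT
      linarith
  have hkey : r'' * ‖g‖ ≤ s - g T := by
    rw [← le_div_iff₀' hr''pos] at *
    exact hgnorm
  -- complexify -g
  set F : (X →L[ℂ] X) →L[ℂ] ℂ := StrongDual.extendRCLike (-g) with hF
  have hFre : ∀ x, (F x).re = -(g x) := by
    intro x
    rw [hF, ContinuousLinearMap.extendTo𝕜'_apply]
    simp
  have hFnorm : ‖F‖ = ‖g‖ := by
    rw [hF, ContinuousLinearMap.norm_extendTo𝕜', norm_neg]
  set φ : (X →L[ℂ] X) →L[ℂ] ℂ := P F with hφ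
  set ψ : (X →L[ℂ] X) →L[ℂ] ℂ := F - φ with hψ
  have hφ0 : ∀ K : X →L[ℂ] X, IsCompactOperator ⇑K → φ K = 0 := by
    have : φ ∈ Set.range ⇑P := ⟨F, rfl⟩
    rw [hRange] at this
    exact this
  have hPψ : P ψ = 0 := by
    rw [hψ, map_sub, hφ, hProj, sub_self]
  have hsum : ‖φ‖ + ‖ψ‖ = ‖F‖ := (hL F).symm
  -- ∀ K ∈ Bset, (ψ K).re ≤ -s
  have hψK : ∀ K ∈ Bset, (ψ K).re ≤ -s := by
    intro K hK
    have h1 : s ≤ g K := hsg K hK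
    have h2 : (F K).re = -(g K) := hFre K
    have h3 : ψ K = F K - φ K := rfl
    rw [h3, hφ0 K hK.1, sub_zero, h2]
    linarith
  -- the submodule of compact operators
  set J : Submodule ℂ (X →L[ℂ] X) :=
    { carrier := Jset
      zero_mem' := h0J
      add_mem' := by
        intro a b ha hb
        have he : ⇑(a + b) = ⇑a + ⇑b := by ext x; simp
        show IsCompactOperator ⇑(a + b)
        rw [he]
        exact IsCompactOperator.add ha hb
      smul_mem' := by
        intro c x hx
        have he : ⇑(c • x) = c • ⇑x := by ext v; simp
        show IsCompactOperator ⇑(c • x)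
        rw [he]
        exact IsCompactOperator.smul hx c } with hJ
  -- bound on the restriction of ψ to J
  have hψJ : ∀ u : J, ‖ψ (u : X →L[ℂ] X)‖ ≤ (-s) * ‖(u : X →L[ℂ] X)‖ := by
    intro u
    rcases eq_or_ne (ψ (u : X →L[ℂ] X)) 0 with h | h
    · rw [h]
      simp only [norm_zero]
      exact mul_nonneg (by linarith) (norm_nonneg _)
    have hu0 : (u : X →L[ℂ] X) ≠ 0 := by
      intro h0
      apply h
      rw [h0, map_zero]
    have hun : (0 : ℝ) < ‖(u : X →L[ℂ] X)‖ := norm_pos_iff.2 hu0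
    set z : ℂ := ψ (u : X →L[ℂ] X) with hz
    have hzn : (0 : ℝ) < ‖z‖ := norm_pos_iff.2 h
    set c : ℂ := (↑(‖z‖ / ‖(u : X →L[ℂ] X)‖) : ℂ) * z⁻¹ with hc
    set w : X →L[ℂ] X := c • (u : X →L[ℂ] X) with hw
    have hcn : ‖c‖ = 1 / ‖(u : X →L[ℂ] X)‖ := by
      rw [hc, norm_mul, norm_inv, Complex.norm_real, Real.norm_eq_abs,
        abs_of_pos (div_pos hzn hun)]
      have ha : ‖z‖ ≠ 0 := hzn.ne'
      have hb : ‖(u : X →L[ℂ] X)‖ ≠ 0 := hun.ne'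
      field_simp
    have hwB : w ∈ Bset := by
      constructor
      · have he : ⇑(c • (u : X →L[ℂ] X)) = c • ⇑(u : X →L[ℂ] X) := by ext v; simp
        show IsCompactOperator ⇑w
        rw [hw, he]
        exact IsCompactOperator.smul u.2 c
      · have hw1 : ‖w‖ = 1 := by
          rw [hw, norm_smul c (u : X →L[ℂ] X), hcn, one_div, inv_mul_cancel₀ hun.ne']
        rw [hw1]
    have hψw : ψ w = (↑(‖z‖ / ‖(u : X →L[ℂ] X)‖) : ℂ) := by
      rw [hw, map_smul, smul_eq_mul, ← hz, hc, mul_assoc, inv_mul_cancel₀ h, mul_one]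
    have hre := hψK w hwB
    rw [hψw] at hre
    simp only [Complex.ofReal_re] at hre
    rw [div_le_iff₀ hun] at hre
    linarith
  letI : SeminormedAddCommGroup J := Submodule.seminormedAddCommGroup J
  letI : NormedSpace ℂ J := Submodule.normedSpace J
  have hρ : ‖ψ.comp J.subtypeL‖ ≤ -s := by
    apply ContinuousLinearMap.opNorm_le_bound _ (by linarith)
    intro u
    simpa using hψJ u
  -- Hahn-Banach extension to show ‖ψ‖ ≤ ‖ψ.comp J.subtypeL‖
  obtain ⟨G, hGext, hGnorm⟩ := exists_extension_norm_eq J (ψ.comp J.subtypeL)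
  have hdiff : ψ - G ∈ Set.range ⇑P := by
    rw [hRange]
    intro K hK
    have : G K = ψ K := by
      have := hGext ⟨K, hK⟩
      simpa using this
    simp [ContinuousLinearMap.sub_apply, this]
  have hPdiff : P (ψ - G) = ψ - G := by
    obtain ⟨u, hu⟩ := hdiff
    rw [← hu, hProj]
  have hPG : P G = G - ψ := by
    have : P ψ - P (ψ - G) = P G := by rw [← map_sub]; congr 1; abel
    rw [← this, hPψ, hPdiff]
    abel
  have hψle : ‖ψ‖ ≤ -s := by
    have h1 := hL G
    rw [hPG] at h1
    have h2 : G - (G - ψ) = ψ := by abel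
    rw [h2] at h1
    have : ‖ψ‖ ≤ ‖G‖ := by
      have := norm_nonneg (G - ψ)
      linarith
    calc ‖ψ‖ ≤ ‖G‖ := this
      _ = ‖ψ.comp J.subtypeL‖ := hGnorm
      _ ≤ -s := hρ
  -- bound on (φ T).re
  have hφT : (φ T).re ≤ ‖φ‖ * infDist T Jset := by
    rcases eq_or_ne ‖φ‖ 0 with h | h
    · have hφ0' : φ = 0 := φ.opNorm_zero_iff.mp h
      rw [hφ0']
      have : ((0 : (X →L[ℂ] X) →L[ℂ] ℂ) T).re = 0 := by simp
      rw [this]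
      exact mul_nonneg (ContinuousLinearMap.opNorm_nonneg _) infDist_nonneg
    have hφpos : 0 < ‖φ‖ := (norm_nonneg φ).lt_of_ne (Ne.symm h)
    have hgoal : ∀ K₀ ∈ Jset, (φ T).re / ‖φ‖ ≤ dist T K₀ := by
      intro K₀ hK₀
      have h1 : φ T = φ (T - K₀) := by
        rw [map_sub, hφ0 K₀ hK₀, sub_zero]
      have h2 : (φ T).re ≤ ‖φ‖ * ‖T - K₀‖ := by
        calc (φ T).re ≤ ‖φ T‖ := Complex.re_le_norm _
          _ = ‖φ (T - K₀)‖ := by rw [h1]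
          _ ≤ ‖φ‖ * ‖T - K₀‖ := ContinuousLinearMap.le_opNorm _ _
      rw [div_le_iff₀ hφpos, dist_eq_norm]
      calc (φ T).re ≤ ‖φ‖ * ‖T - K₀‖ := h2
        _ = ‖T - K₀‖ * ‖φ‖ := mul_comm _ _
    have h3 : (φ T).re / ‖φ‖ ≤ infDist T Jset := by
      by_contra hcc
      push_neg at hcc
      obtain ⟨K₀, hK₀, hd⟩ := (infDist_lt_iff hJne).1 hcc
      exact absurd hd (not_lt.2 (hgoal K₀ hK₀))
    calc (φ T).re = ((φ T).re / ‖φ‖) * ‖φ‖ := by field_simp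
      _ ≤ infDist T Jset * ‖φ‖ := mul_le_mul_of_nonneg_right h3 hφpos.le
      _ = ‖φ‖ * infDist T Jset := mul_comm _ _
  have hψT : (ψ T).re ≤ ‖ψ‖ * ‖T‖ := by
    calc (ψ T).re ≤ ‖ψ T‖ := Complex.re_le_norm _
      _ ≤ ‖ψ‖ * ‖T‖ := ContinuousLinearMap.le_opNorm _ _
  -- final chain
  have hFT : (F T).re = (φ T).re + (ψ T).re := by
    have : F T = φ T + ψ T := by rw [hψ]; simp
    rw [this, Complex.add_re]
  have hgT' : (F T).re = -(g T) := hFre T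
  have hd_le : infDist T Jset ≤ M := le_max_right _ _
  have hT_le : ‖T‖ - 1 ≤ M := le_max_left _ _
  have hstep1 : r'' * ‖g‖ ≤ -(g T) - (-s) := by linarith
  have hstep2 : r'' * ‖g‖ ≤ (φ T).re + (ψ T).re - ‖ψ‖ := by
    rw [← hFT, hgT']
    linarith
  have hstep3 : (φ T).re + (ψ T).re - ‖ψ‖ ≤ ‖φ‖ * M + ‖ψ‖ * M := by
    have hφnn : (0 : ℝ) ≤ ‖φ‖ := norm_nonneg φ
    have hψnn : (0 : ℝ) ≤ ‖ψ‖ := norm_nonneg ψ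
    have hφM : ‖φ‖ * infDist T Jset ≤ ‖φ‖ * M :=
      mul_le_mul_of_nonneg_left hd_le hφnn
    have hψM : ‖ψ‖ * (‖T‖ - 1) ≤ ‖ψ‖ * M :=
      mul_le_mul_of_nonneg_left hT_le hψnn
    have hexp : ‖ψ‖ * (‖T‖ - 1) = ‖ψ‖ * ‖T‖ - ‖ψ‖ := by ring
    linarith
  have hfinal : r'' * ‖g‖ ≤ ‖g‖ * M := by
    calc r'' * ‖g‖ ≤ ‖φ‖ * M + ‖ψ‖ * M := le_trans hstep2 hstep3
      _ = (‖φ‖ + ‖ψ‖) * M := by ring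
      _ = ‖F‖ * M := by rw [hsum]
      _ = ‖g‖ * M := by rw [hFnorm]
  have : r'' ≤ M := by
    rw [mul_comm] at hfinal
    exact le_of_mul_le_mul_left hfinal hgpos
  linarith
end

section
/- Let H be a separable infinite-dimensional complex Hilbert space and let T be a positive bounded linear operator on H. Then there exists a compact positive operator K on H such that ‖T − K‖ = d(T, K(H)). -/
open scoped ComplexInnerProductSpace

section Aux

variable {H : Type*} [NormedAddCommGroup H] [InnerProductSpace ℂ H] [CompleteSpace H]

private lemma aux_contmax (c : ℝ) : Continuous (fun t : ℝ => max (t - c) 0) :=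
  (continuous_id.sub continuous_const).max continuous_const

private lemma aux_finiteRank_isCompact (A : H →L[ℂ] H)
    (h : FiniteDimensional ℂ (LinearMap.range (A : H →ₗ[ℂ] H))) : IsCompactOperator ⇑A := by
  rw [show ⇑A = ⇑(A : H →ₗ[ℂ] H) from rfl,
    isCompactOperator_iff_image_closedBall_subset_compact (A : H →ₗ[ℂ] H) one_pos]
  refine ⟨(↑) '' (Metric.closedBall (0 : LinearMap.range (A : H →ₗ[ℂ] H)) ‖A‖), ?_, ?_⟩
  · exact (ProperSpace.isCompact_closedBall _ _).image continuous_subtype_val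
  · rintro - ⟨x, hx, rfl⟩
    refine ⟨⟨A x, LinearMap.mem_range_self _ x⟩, ?_, rfl⟩
    rw [Metric.mem_closedBall, dist_zero_right]
    calc ‖(⟨A x, _⟩ : LinearMap.range (A : H →ₗ[ℂ] H))‖ = ‖A x‖ := rfl
      _ ≤ ‖A‖ * ‖x‖ := A.le_opNorm x
      _ ≤ ‖A‖ * 1 := by
          gcongr; simpa [dist_zero_right] using Metric.mem_closedBall.mp hx
      _ = ‖A‖ := mul_one _

private lemma aux_exists_orthonormal_seq (V : Submodule ℂ H) (hV : ¬ FiniteDimensional ℂ V) :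
    ∃ e : ℕ → H, (∀ n, e n ∈ V) ∧ Orthonormal ℂ e := by
  have hinf : (Module.Basis.ofVectorSpaceIndex ℂ V).Infinite := by
    intro hfin
    have := hfin.fintype
    exact hV (Module.Finite.of_basis (Module.Basis.ofVectorSpace ℂ V))
  let emb := hinf.natEmbedding
  have hli : LinearIndependent ℂ (fun n : ℕ => Module.Basis.ofVectorSpace ℂ V (emb n)) :=
    (Module.Basis.ofVectorSpace ℂ V).linearIndependent.comp emb emb.injective
  set e : ℕ → V := InnerProductSpace.gramSchmidtNormed ℂ (fun n : ℕ => Module.Basis.ofVectorSpace ℂ V (emb n)) with he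
  have horth : Orthonormal ℂ e := InnerProductSpace.gramSchmidtNormed_orthonormal hli
  refine ⟨fun n => (e n : H), fun n => (e n).2, ?_⟩
  rw [orthonormal_iff_ite] at horth ⊢
  intro i j
  simpa [Submodule.coe_inner] using horth i j

private lemma aux_bessel_tendsto {e : ℕ → H} (he : Orthonormal ℂ e) (y : H) :
    Filter.Tendsto (fun n => ⟪e n, y⟫) Filter.atTop (nhds 0) := by
  have hsum : Summable fun i => ‖⟪e i, y⟫‖ ^ 2 := he.inner_products_summable y
  have h2 := hsum.tendsto_atTop_zero
  rw [tendsto_zero_iff_norm_tendsto_zero]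
  have hfn : (fun n => ‖⟪e n, y⟫‖) = fun n => Real.sqrt (‖⟪e n, y⟫‖ ^ 2) := by
    funext n; rw [Real.sqrt_sq (norm_nonneg _)]
  rw [hfn]
  have h3 := (Real.continuous_sqrt.tendsto 0).comp h2
  simp only [Function.comp_def, Real.sqrt_zero] at h3
  exact h3

private lemma aux_exists_small_vector (C : H →L[ℂ] H) (hC : IsCompactOperator ⇑C)
    (V : Submodule ℂ H) (hV : ¬ FiniteDimensional ℂ V) {δ : ℝ} (hδ : 0 < δ) :
    ∃ x ∈ V, ‖x‖ = 1 ∧ ‖C x‖ < δ := by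
  obtain ⟨e, heV, he⟩ := aux_exists_orthonormal_seq V hV
  have hunit : ∀ n, ‖e n‖ = 1 := fun n => he.1 n
  have hcpt : IsCompact (closure (⇑C '' Metric.closedBall 0 1)) :=
    hC.isCompact_closure_image_closedBall (𝕜₁ := ℂ) (f := (C : H →ₗ[ℂ] H)) 1
  have hmem : ∀ n, C (e n) ∈ closure (⇑C '' Metric.closedBall 0 1) := fun n =>
    subset_closure ⟨e n, by simp [Metric.mem_closedBall, dist_zero_right, hunit n], rfl⟩
  obtain ⟨a, -, φ, hφ, hconv⟩ := hcpt.tendsto_subseq hmem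
  have ha : a = 0 := by
    have h1 : Filter.Tendsto (fun n => ⟪C (e (φ n)), a⟫) Filter.atTop (nhds ⟪a, a⟫) :=
      ((continuous_id.inner continuous_const).tendsto a).comp hconv
    have h2 : Filter.Tendsto (fun n => ⟪C (e (φ n)), a⟫) Filter.atTop (nhds 0) := by
      have hfn : (fun n => ⟪C (e (φ n)), a⟫)
          = fun n => ⟪e (φ n), ContinuousLinearMap.adjoint C a⟫ := by
        funext n; rw [ContinuousLinearMap.adjoint_inner_right]
      rw [hfn]
      exact (aux_bessel_tendsto he (ContinuousLinearMap.adjoint C a)).comp hφ.tendsto_atTop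
    exact inner_self_eq_zero.mp (tendsto_nhds_unique h1 h2)
  rw [ha] at hconv
  have hev : ∀ᶠ n in Filter.atTop, ‖C (e (φ n))‖ < δ := by
    have h := hconv.norm
    simp only [norm_zero] at h
    exact h.eventually_lt_const hδ
  obtain ⟨n, hn⟩ := hev.exists
  exact ⟨e (φ n), heV _, hunit _, hn⟩

private lemma aux_key_ineq (T : H →L[ℂ] H) (hT : 0 ≤ T) {c : ℝ} (u : H) :
    c * ‖cfc (fun t : ℝ => max (t - c) 0) T u‖ ^ 2
      ≤ (⟪T (cfc (fun t : ℝ => max (t - c) 0) T u), cfc (fun t : ℝ => max (t - c) 0) T u⟫).re := by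
  have hsa : IsSelfAdjoint T := hT.isSelfAdjoint
  set f : ℝ → ℝ := fun t => max (t - c) 0 with hf
  set A : H →L[ℂ] H := cfc f T with hA
  have hAsa : IsSelfAdjoint A := cfc_predicate f T
  have hcont : ContinuousOn f (spectrum ℝ T) := (aux_contmax c).continuousOn
  have hcont2 : ContinuousOn (fun t : ℝ => t * f t) (spectrum ℝ T) :=
    (continuous_id.mul (aux_contmax c)).continuousOn
  have h1 : A * (T * A) = cfc (fun t => f t * (t * f t)) T := by
    have hTA : cfc (fun t : ℝ => t * f t) T = T * A := by
      rw [cfc_mul (fun t : ℝ => t) f T (by fun_prop) hcont, cfc_id' ℝ T]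
    rw [cfc_mul f (fun t : ℝ => t * f t) T hcont hcont2, hTA]
  have h2 : c • (A * A) = cfc (fun t => c * (f t * f t)) T := by
    rw [cfc_const_mul _ (fun t => f t * f t) T ((aux_contmax c).mul (aux_contmax c)).continuousOn,
      cfc_mul _ _ T hcont hcont]
  have hle : c • (A * A) ≤ A * (T * A) := by
    rw [h1, h2]
    refine cfc_mono fun t ht => ?_
    rcases le_or_gt t c with h | h
    · have h0 : f t = 0 := by simp [hf, max_eq_right, sub_nonpos.mpr h]
      simp [h0]
    · have h0 : f t = t - c := max_eq_left (by linarith)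
      rw [h0]; nlinarith
  have hpos := (ContinuousLinearMap.le_def _ _ |>.mp hle).re_inner_nonneg_left u
  have e0 : (A * (T * A) - c • (A * A)) u = A (T (A u)) - c • (A (A u)) := by
    simp [ContinuousLinearMap.sub_apply, ContinuousLinearMap.mul_apply,
      ContinuousLinearMap.smul_apply]
  have hsym : (A : H →ₗ[ℂ] H).IsSymmetric :=
    ContinuousLinearMap.isSelfAdjoint_iff_isSymmetric.mp hAsa
  have e1 : ⟪A (T (A u)), u⟫ = ⟪T (A u), A u⟫ := hsym.apply_clm _ _
  have e2 : (⟪c • (A (A u)), u⟫).re = c * ‖A u‖ ^ 2 := by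
    have h3 : ⟪A (A u), u⟫ = ⟪A u, A u⟫ := hsym.apply_clm _ _
    rw [RCLike.real_smul_eq_coe_smul (K := ℂ), inner_smul_left, h3]
    have h4 : (⟪A u, A u⟫ : ℂ).re = ‖A u‖ ^ 2 := inner_self_eq_norm_sq (𝕜 := ℂ) (A u)
    simp only [RCLike.conj_ofReal]
    rw [Complex.mul_re]
    simp [h4]
    left; rw [← Complex.ofReal_pow, Complex.ofReal_re]
  rw [e0, inner_sub_left] at hpos
  have hfin : (0:ℝ) ≤ (⟪T (A u), A u⟫).re - c * ‖A u‖ ^ 2 := by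
    simpa [e1, e2] using hpos
  linarith

private lemma aux_compact_cut (T : H →L[ℂ] H) (hT : 0 ≤ T) {c : ℝ}
    (C : H →L[ℂ] H) (hC : IsCompactOperator ⇑C) (hn : ‖T - C‖ < c) :
    IsCompactOperator ⇑(cfc (fun t : ℝ => max (t - c) 0) T) := by
  set A : H →L[ℂ] H := cfc (fun t : ℝ => max (t - c) 0) T with hA
  refine aux_finiteRank_isCompact A (by_contra fun hinf => ?_)
  obtain ⟨x, hxV, hx1, hxC⟩ := aux_exists_small_vector C hC (LinearMap.range (A : H →ₗ[ℂ] H)) hinf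
    (sub_pos.mpr hn)
  obtain ⟨u, hu⟩ := hxV
  have hkey : c * ‖A u‖ ^ 2 ≤ (⟪T (A u), A u⟫).re := aux_key_ineq T hT u
  rw [show A u = x from hu, hx1] at hkey
  simp only [one_pow, mul_one] at hkey
  -- upper bound on re ⟪(T - C) x, x⟫
  have hub : (⟪(T - C) x, x⟫).re ≤ ‖T - C‖ := by
    calc (⟪(T - C) x, x⟫).re ≤ ‖(⟪(T - C) x, x⟫ : ℂ)‖ := Complex.re_le_norm _
      _ ≤ ‖(T - C) x‖ * ‖x‖ := norm_inner_le_norm _ _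
      _ = ‖(T - C) x‖ := by rw [hx1, mul_one]
      _ ≤ ‖T - C‖ * ‖x‖ := (T - C).le_opNorm x
      _ = ‖T - C‖ := by rw [hx1, mul_one]
  have hCb : (⟪C x, x⟫).re ≤ ‖C x‖ := by
    calc (⟪C x, x⟫).re ≤ ‖(⟪C x, x⟫ : ℂ)‖ := Complex.re_le_norm _
      _ ≤ ‖C x‖ * ‖x‖ := norm_inner_le_norm _ _
      _ = ‖C x‖ := by rw [hx1, mul_one]
  have hlb : c - ‖C x‖ ≤ (⟪(T - C) x, x⟫).re := by
    have : (⟪(T - C) x, x⟫ : ℂ) = ⟪T x, x⟫ - ⟪C x, x⟫ := by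
      rw [ContinuousLinearMap.sub_apply, inner_sub_left]
    rw [this, Complex.sub_re]
    have : c ≤ (⟪T x, x⟫).re := hkey
    linarith
  linarith

end Aux

/-- Every positive bounded operator on a separable infinite-dimensional complex Hilbert space
has a positive compact best approximant from `K(H)`. -/
theorem stmt_9 {H : Type*} [NormedAddCommGroup H] [InnerProductSpace ℂ H] [CompleteSpace H]
    [TopologicalSpace.SeparableSpace H] (hH : ¬ FiniteDimensional ℂ H)
    (T : H →L[ℂ] H) (hsa : ContinuousLinearMap.adjoint T = T)
    (hpos : ∀ x : H, 0 ≤ (⟪T x, x⟫).re) :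
    ∃ K : H →L[ℂ] H, IsCompactOperator ⇑K ∧ ContinuousLinearMap.adjoint K = K ∧
      (∀ x : H, 0 ≤ (⟪K x, x⟫).re) ∧
      ‖T - K‖ = Metric.infDist T {K' : H →L[ℂ] H | IsCompactOperator ⇑K'} := by
  set S : Set (H →L[ℂ] H) := {K' : H →L[ℂ] H | IsCompactOperator ⇑K'} with hS
  have hSne : S.Nonempty := ⟨0, isCompactOperator_zero⟩
  have hSclosed : IsClosed S := isClosed_setOf_isCompactOperator
  set m : ℝ := Metric.infDist T S with hm
  have hm0 : 0 ≤ m := Metric.infDist_nonneg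
  have hTsa : IsSelfAdjoint T := ContinuousLinearMap.isSelfAdjoint_iff'.mpr hsa
  have hT0 : 0 ≤ T := by
    rw [ContinuousLinearMap.nonneg_iff_isPositive T]
    exact ⟨ContinuousLinearMap.isSelfAdjoint_iff_isSymmetric.mp hTsa, fun x => hpos x⟩
  set K : H →L[ℂ] H := cfc (fun t : ℝ => max (t - m) 0) T with hK
  have hKsa : IsSelfAdjoint K := cfc_predicate _ T
  have hK0 : 0 ≤ K := cfc_nonneg fun t ht => le_max_right _ _
  -- K is compact
  have hKcpt : K ∈ S := by
    refine hSclosed.closure_subset ?_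
    rw [Metric.mem_closure_iff]
    intro ε hε
    have hlt : m < m + ε / 2 := by linarith
    obtain ⟨C, hCS, hCd⟩ := (Metric.infDist_lt_iff hSne).mp hlt
    have hCn : ‖T - C‖ < m + ε / 2 := by rwa [dist_eq_norm] at hCd
    set A : H →L[ℂ] H := cfc (fun t : ℝ => max (t - (m + ε / 2)) 0) T with hA
    have hAcpt : IsCompactOperator ⇑A := aux_compact_cut T hT0 C hCS hCn
    refine ⟨A, hAcpt, ?_⟩
    rw [dist_eq_norm]
    have hKA : K - A = cfc (fun t : ℝ => max (t - m) 0 - max (t - (m + ε / 2)) 0) T := by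
      rw [cfc_sub _ _ T (aux_contmax m).continuousOn (aux_contmax (m + ε / 2)).continuousOn]
    rw [hKA]
    have hb : ‖cfc (fun t : ℝ => max (t - m) 0 - max (t - (m + ε / 2)) 0) T‖ ≤ ε / 2 := by
      refine norm_cfc_le (by linarith) fun t ht => ?_
      rw [Real.norm_eq_abs]
      rcases le_total t m with h | h
      · rw [max_eq_right (by linarith : t - m ≤ 0),
          max_eq_right (by linarith : t - (m + ε / 2) ≤ 0)]
        simp only [sub_zero, abs_zero]
        linarith
      · rcases le_total t (m + ε / 2) with h' | h'
        · rw [max_eq_left (by linarith : (0:ℝ) ≤ t - m),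
            max_eq_right (by linarith : t - (m + ε / 2) ≤ 0), sub_zero, abs_le]
          constructor <;> linarith
        · rw [max_eq_left (by linarith : (0:ℝ) ≤ t - m),
            max_eq_left (by linarith : (0:ℝ) ≤ t - (m + ε / 2)), abs_le]
          constructor <;> linarith
    linarith
  -- norm bound
  have hTK : ‖T - K‖ ≤ m := by
    have h2 := cfc_sub (R := ℝ) (fun t : ℝ => t) (fun t : ℝ => max (t - m) 0) T
      continuous_id.continuousOn (aux_contmax m).continuousOn
    rw [cfc_id' ℝ T] at h2
    rw [← h2]
    refine norm_cfc_le hm0 fun t ht => ?_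
    have ht0 : 0 ≤ t := spectrum_nonneg_of_nonneg hT0 ht
    rw [Real.norm_eq_abs]
    show |t - max (t - m) 0| ≤ m
    rcases le_total t m with h | h
    · rw [max_eq_right (by linarith : t - m ≤ 0), sub_zero, abs_of_nonneg ht0]
      exact h
    · rw [max_eq_left (by linarith : (0:ℝ) ≤ t - m)]
      simp [abs_of_nonneg hm0]
  have hKpos : K.IsPositive := (ContinuousLinearMap.nonneg_iff_isPositive K).mp hK0
  refine ⟨K, hKcpt, ContinuousLinearMap.isSelfAdjoint_iff'.mp hKsa, fun x => hKpos.re_inner_nonneg_left x, ?_⟩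
  refine le_antisymm hTK ?_
  have hle : Metric.infDist T S ≤ dist T K := Metric.infDist_le_dist_of_mem hKcpt
  rw [dist_eq_norm] at hle
  exact hle
end

section
/- Let H be a separable infinite-dimensional complex Hilbert space and let T be a self-adjoint bounded linear operator on H. Then there exists a compact self-adjoint operator K on H such that ‖T − K‖ = d(T, K(H)). -/
open ContinuousLinearMap RCLike Metric Set Filter Topology

local notation "⟪" x ", " y "⟫" => @inner ℂ _ _ x y

private lemma clamp_abs_le {d : ℝ} (hd : 0 ≤ d) (x : ℝ) : |max (-d) (min x d)| ≤ d := by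
  rw [abs_le]
  exact ⟨le_max_left _ _, max_le (by linarith) (min_le_right _ _)⟩

private lemma clamp_lip {d s x : ℝ} (hds : d ≤ s) :
    |(x - max (-s) (min x s)) - (x - max (-d) (min x d))| ≤ s - d := by
  rw [abs_le]
  simp only [max_def, min_def]
  constructor <;> split_ifs <;> linarith

private lemma key_fn_id {s : ℝ} (hs : 0 ≤ s) (x : ℝ) :
    (Real.sqrt (x ^ 2 - s ^ 2) * |x - max (-s) (min x s)|) *
      (Real.sqrt (x ^ 2 - s ^ 2) * |x - max (-s) (min x s)|)
      + s ^ 2 * ((x - max (-s) (min x s)) * (x - max (-s) (min x s)))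
    = (x - max (-s) (min x s)) * (x * (x * (x - max (-s) (min x s)))) := by
  rcases le_total x s with hxs | hxs
  · rcases le_total (-s) x with hx | hx
    · rw [min_eq_left hxs, max_eq_right hx]; simp
    · have hcl : max (-s) (min x s) = -s := by
        rw [min_eq_left hxs]; exact max_eq_left hx
      have h2 : (0:ℝ) ≤ x ^ 2 - s ^ 2 := by nlinarith
      rw [hcl, mul_mul_mul_comm, Real.mul_self_sqrt h2, abs_mul_abs_self]
      ring
  · have hcl : max (-s) (min x s) = s := by
      rw [min_eq_right hxs]; exact max_eq_right (by linarith)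
    have h2 : (0:ℝ) ≤ x ^ 2 - s ^ 2 := by nlinarith
    rw [hcl, mul_mul_mul_comm, Real.mul_self_sqrt h2, abs_mul_abs_self]
    ring

private lemma aux_compact {H : Type*} [NormedAddCommGroup H] [InnerProductSpace ℂ H]
    [CompleteSpace H] (T : H →L[ℂ] H) (hT : IsSelfAdjoint T) {s : ℝ}
    (hs : Metric.infDist T {K' : H →L[ℂ] H | IsCompactOperator ⇑K'} < s) :
    IsCompactOperator ⇑(cfc (fun x : ℝ => x - max (-s) (min x s)) T) := by
  classical
  have hd0 : (0:ℝ) ≤ Metric.infDist T {K' : H →L[ℂ] H | IsCompactOperator ⇑K'} :=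
    Metric.infDist_nonneg
  have hs0 : 0 ≤ s := le_of_lt (lt_of_le_of_lt hd0 hs)
  have hne : Set.Nonempty {K' : H →L[ℂ] H | IsCompactOperator ⇑K'} :=
    ⟨0, by simp only [Set.mem_setOf_eq, ContinuousLinearMap.coe_zero]; exact isCompactOperator_zero⟩
  obtain ⟨C, hC, hTC⟩ : ∃ C : H →L[ℂ] H, IsCompactOperator ⇑C ∧ ‖T - C‖ < s := by
    obtain ⟨C, hCmem, hdist⟩ := (Metric.infDist_lt_iff hne).mp hs
    exact ⟨C, hCmem, by rwa [dist_eq_norm] at hdist⟩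
  set hf : ℝ → ℝ := fun x => x - max (-s) (min x s) with hhf
  set qf : ℝ → ℝ := fun x => Real.sqrt (x ^ 2 - s ^ 2) * |x - max (-s) (min x s)| with hqf
  have hfc : Continuous hf := by rw [hhf]; fun_prop
  have hqc : Continuous qf := by rw [hqf]; fun_prop
  set A : H →L[ℂ] H := cfc hf T with hA
  set D : H →L[ℂ] H := cfc qf T with hD
  have hAsa : IsSelfAdjoint A := cfc_predicate hf T
  have hDsa : IsSelfAdjoint D := cfc_predicate qf T
  -- the key operator identity
  have hEq : D * D + (s ^ 2 : ℝ) • (A * A) = A * (T * (T * A)) := by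
    have e1 : cfc (fun x : ℝ => hf x * (x * (x * hf x))) T = A * (T * (T * A)) := by
      rw [cfc_mul hf (fun x : ℝ => x * (x * hf x)) T hfc.continuousOn (by fun_prop),
        cfc_mul (fun x : ℝ => x) (fun x : ℝ => x * hf x) T continuousOn_id (by fun_prop),
        cfc_mul (fun x : ℝ => x) hf T continuousOn_id hfc.continuousOn,
        cfc_id' ℝ T]
    have e2 : cfc (fun x : ℝ => qf x * qf x + s ^ 2 * (hf x * hf x)) T
        = D * D + (s ^ 2 : ℝ) • (A * A) := by
      rw [cfc_add T _ _ (by fun_prop) (by fun_prop),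
        cfc_mul qf qf T hqc.continuousOn hqc.continuousOn,
        cfc_const_mul (s ^ 2) (fun x : ℝ => hf x * hf x) T (by fun_prop),
        cfc_mul hf hf T hfc.continuousOn hfc.continuousOn]
    rw [← e1, ← e2]
    exact cfc_congr fun x _ => key_fn_id hs0 x
  -- the key norm inequality
  have hkey : ∀ y : H, s * ‖A y‖ ≤ ‖T (A y)‖ := by
    have hAsym : ∀ u v : H, ⟪A u, v⟫ = ⟪u, A v⟫ := fun u v => hAsa.isSymmetric u v
    have hDsym : ∀ u v : H, ⟪D u, v⟫ = ⟪u, D v⟫ := fun u v => hDsa.isSymmetric u v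
    have hTsym : ∀ u v : H, ⟪T u, v⟫ = ⟪u, T v⟫ := fun u v => hT.isSymmetric u v
    intro y
    have h1 : re ⟪(A * (T * (T * A))) y, y⟫ = ‖T (A y)‖ ^ 2 := by
      simp only [ContinuousLinearMap.mul_apply]
      rw [hAsym (T (T (A y))) y, hTsym (T (A y)) (A y)]
      exact inner_self_eq_norm_sq _
    have h2 : re ⟪(D * D) y, y⟫ = ‖D y‖ ^ 2 := by
      simp only [ContinuousLinearMap.mul_apply]
      rw [hDsym (D y) y]
      exact inner_self_eq_norm_sq _
    have h3 : re ⟪(((s ^ 2 : ℝ) • (A * A)) y), y⟫ = s ^ 2 * ‖A y‖ ^ 2 := by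
      simp only [ContinuousLinearMap.smul_apply, ContinuousLinearMap.mul_apply]
      rw [RCLike.real_smul_eq_coe_smul (K := ℂ), inner_smul_real_left, hAsym (A y) y,
        smul_re, inner_self_eq_norm_sq _]
    have := congrArg (fun B : H →L[ℂ] H => re ⟪B y, y⟫) hEq
    simp only [ContinuousLinearMap.add_apply, inner_add_left, map_add] at this
    rw [h1, h2, h3] at this
    have hsq : (s * ‖A y‖) ^ 2 ≤ ‖T (A y)‖ ^ 2 := by nlinarith [sq_nonneg ‖D y‖]
    exact le_of_pow_le_pow_left₀ two_ne_zero (norm_nonneg _) hsq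
  -- total boundedness of the image of the unit ball
  have htb : TotallyBounded (⇑A '' Metric.closedBall 0 1) := by
    rw [Metric.totallyBounded_iff]
    intro ε hε
    set c : ℝ := ‖T - C‖ with hc
    have hc0 : 0 ≤ c := norm_nonneg _
    have hsc : 0 < s - c := by simp only [hc]; linarith
    set δ : ℝ := (s - c) * ε / 4 with hδ
    have hδpos : 0 < δ := by positivity
    have hCA : IsCompactOperator ⇑((C.comp A).toLinearMap) := hC.comp_clm A
    have h1 : TotallyBounded ((fun x => C (A x)) '' Metric.closedBall 0 1) :=
      ((hCA.isCompact_closure_image_closedBall 1).totallyBounded).subset subset_closure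
    obtain ⟨t, htfin, htcov⟩ := (Metric.totallyBounded_iff.mp h1) δ hδpos
    set P : H → Prop := fun z => ∃ x : H, x ∈ Metric.closedBall (0:H) 1 ∧ C (A x) ∈ ball z δ
      with hP
    set pick : H → H := fun z => if hz : P z then A hz.choose else 0 with hpick
    refine ⟨pick '' t, htfin.image _, ?_⟩
    rintro _ ⟨x, hx, rfl⟩
    have hmem : (fun x => C (A x)) x ∈ ⋃ y ∈ t, ball y δ := htcov ⟨x, hx, rfl⟩
    simp only [mem_iUnion, exists_prop] at hmem
    obtain ⟨z, hz, hxz⟩ := hmem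
    have hPz : P z := ⟨x, hx, hxz⟩
    have hx'mem := hPz.choose_spec.1
    have hx'ball := hPz.choose_spec.2
    set x' := hPz.choose
    have hpickz : pick z = A x' := by simp only [hpick]; exact dif_pos hPz
    refine mem_iUnion₂.mpr ⟨pick z, mem_image_of_mem _ hz, ?_⟩
    rw [mem_ball, hpickz, dist_eq_norm]
    have hAw : A (x - x') = A x - A x' := map_sub _ _ _
    have hCw : ‖C (A (x - x'))‖ < 2 * δ := by
      have : C (A (x - x')) = C (A x) - C (A x') := by rw [hAw, map_sub]
      rw [this]
      calc ‖C (A x) - C (A x')‖ ≤ ‖C (A x) - z‖ + ‖z - C (A x')‖ := norm_sub_le_norm_sub_add_norm_sub _ _ _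
        _ < δ + δ := by
            apply add_lt_add
            · rw [← dist_eq_norm]; exact hxz
            · rw [← dist_eq_norm, dist_comm]; exact hx'ball
        _ = 2 * δ := by ring
    have hTb : ‖T (A (x - x'))‖ ≤ ‖(T - C) (A (x - x'))‖ + ‖C (A (x - x'))‖ := by
      have : T (A (x - x')) = (T - C) (A (x - x')) + C (A (x - x')) := by
        simp [ContinuousLinearMap.sub_apply]
      rw [this]; exact norm_add_le _ _
    have hTC' : ‖(T - C) (A (x - x'))‖ ≤ c * ‖A (x - x')‖ := (T - C).le_opNorm _
    have hk := hkey (x - x')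
    have hfin : (s - c) * ‖A (x - x')‖ < 2 * δ := by nlinarith
    have : ‖A (x - x')‖ < ε := by
      rw [hδ] at hfin; nlinarith
    rwa [hAw] at this
  refine ⟨closure (⇑A '' Metric.closedBall 0 1),
    TotallyBounded.isCompact_of_isClosed htb.closure isClosed_closure, ?_⟩
  exact Filter.mem_of_superset (Metric.ball_mem_nhds (0:H) one_pos)
    (fun x hx => subset_closure (Set.mem_image_of_mem _ (Metric.ball_subset_closedBall hx)))

/-- Every self-adjoint bounded operator on a separable infinite-dimensional complex Hilbert
space has a self-adjoint compact best approximant from `K(H)`. -/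
theorem stmt_10 {H : Type*} [NormedAddCommGroup H] [InnerProductSpace ℂ H] [CompleteSpace H]
    [TopologicalSpace.SeparableSpace H] (hH : ¬ FiniteDimensional ℂ H)
    (T : H →L[ℂ] H) (hsa : ContinuousLinearMap.adjoint T = T) :
    ∃ K : H →L[ℂ] H, IsCompactOperator ⇑K ∧ ContinuousLinearMap.adjoint K = K ∧
      ‖T - K‖ = Metric.infDist T {K' : H →L[ℂ] H | IsCompactOperator ⇑K'} := by
  classical
  have hT : IsSelfAdjoint T := ContinuousLinearMap.isSelfAdjoint_iff'.mpr hsa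
  set d : ℝ := Metric.infDist T {K' : H →L[ℂ] H | IsCompactOperator ⇑K'} with hdd
  have hd0 : 0 ≤ d := Metric.infDist_nonneg
  set K : H →L[ℂ] H := cfc (fun x : ℝ => x - max (-d) (min x d)) T with hK
  have hKsa : IsSelfAdjoint K := cfc_predicate _ T
  have hkeydist : ∀ s : ℝ, d ≤ s →
      ‖cfc (fun x : ℝ => x - max (-s) (min x s)) T - K‖ ≤ s - d := by
    intro s hls
    rw [hK, ← cfc_sub (fun x : ℝ => x - max (-s) (min x s))
      (fun x : ℝ => x - max (-d) (min x d)) T (by fun_prop) (by fun_prop)]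
    apply norm_cfc_le (by linarith)
    intro x _
    simpa [Real.norm_eq_abs] using clamp_lip (x := x) hls
  have hKc : IsCompactOperator ⇑K := by
    have htend : Tendsto (fun n : ℕ =>
        cfc (fun x : ℝ => x - max (-(d + 1 / ((n:ℝ) + 1))) (min x (d + 1 / ((n:ℝ) + 1)))) T)
        atTop (𝓝 K) := by
      rw [← tendsto_sub_nhds_zero_iff]
      refine squeeze_zero_norm (fun n => ?_) tendsto_one_div_add_atTop_nhds_zero_nat
      have hle : d ≤ d + 1 / ((n:ℝ) + 1) := by
        have : (0:ℝ) < 1 / ((n:ℝ) + 1) := by positivity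
        linarith
      simpa using hkeydist (d + 1 / ((n:ℝ) + 1)) hle
    refine isCompactOperator_of_tendsto htend (Eventually.of_forall fun n => ?_)
    apply aux_compact T hT
    rw [← hdd]
    have : (0:ℝ) < 1 / ((n:ℝ) + 1) := by positivity
    linarith
  refine ⟨K, hKc, ContinuousLinearMap.isSelfAdjoint_iff'.mp hKsa, ?_⟩
  have hTK : T - K = cfc (fun x : ℝ => max (-d) (min x d)) T := by
    nth_rewrite 1 [← cfc_id' ℝ T]
    rw [hK, ← cfc_sub (fun x : ℝ => x) (fun x : ℝ => x - max (-d) (min x d)) T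
      (by fun_prop) (by fun_prop)]
    exact cfc_congr fun x _ => by ring
  apply le_antisymm
  · rw [hTK]
    apply norm_cfc_le hd0
    intro x _
    simpa [Real.norm_eq_abs] using clamp_abs_le hd0 x
  · rw [← dist_eq_norm]
    exact Metric.infDist_le_dist_of_mem hKc
end

section
/- Let H be a separable infinite-dimensional complex Hilbert space and let T be a positive bounded linear operator on H with ‖T‖ ≥ 1. Then there exists a compact positive operator K on H with ‖K‖ ≤ 1 such that ‖T − K‖ = d(T, B_{K(H)}). -/
set_option maxHeartbeats 1000000

open Topology
open scoped ComplexInnerProductSpace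

private theorem aux_finrank {H : Type*} [NormedAddCommGroup H] [InnerProductSpace ℂ H]
    (A : H →L[ℂ] H) (V : Submodule ℂ H) [FiniteDimensional ℂ V]
    (hr : ∀ x, A x ∈ V) : IsCompactOperator ⇑A := by
  refine ⟨(↑) '' Metric.closedBall (0 : V) ‖A‖, ?_, ?_⟩
  · exact (isCompact_closedBall _ _).image continuous_subtype_val
  · filter_upwards [Metric.closedBall_mem_nhds (0 : H) one_pos] with x hx
    refine ⟨⟨A x, hr x⟩, ?_, rfl⟩
    simp only [Metric.mem_closedBall, dist_zero_right] at hx ⊢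
    calc ‖(⟨A x, hr x⟩ : V)‖ = ‖A x‖ := rfl
      _ ≤ ‖A‖ * ‖x‖ := A.le_opNorm x
      _ ≤ ‖A‖ * 1 := by nlinarith [norm_nonneg A, A.le_opNorm x]
      _ = ‖A‖ := mul_one _

private theorem aux_onseq {H : Type*} [NormedAddCommGroup H] [InnerProductSpace ℂ H]
    [CompleteSpace H]
    (V : Submodule ℂ H) (hVc : IsClosed (V : Set H)) (hV : ¬ FiniteDimensional ℂ V) :
    ∃ x : ℕ → H, Orthonormal ℂ x ∧ ∀ n, x n ∈ V := by
  haveI : CompleteSpace V := hVc.completeSpace_coe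
  obtain ⟨w, b, hb⟩ := exists_hilbertBasis ℂ V
  have hw : w.Infinite := by
    by_contra hfin
    rw [Set.not_infinite] at hfin
    apply hV
    have htop : (Submodule.span ℂ w : Submodule ℂ V).topologicalClosure = ⊤ := by
      have := b.dense_span
      rwa [hb, Subtype.range_coe] at this
    haveI : FiniteDimensional ℂ (Submodule.span ℂ w : Submodule ℂ V) :=
      FiniteDimensional.span_of_finite ℂ hfin
    have hclosed : IsClosed ((Submodule.span ℂ w : Submodule ℂ V) : Set V) :=
      Submodule.closed_of_finiteDimensional _
    rw [hclosed.submodule_topologicalClosure_eq] at htop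
    have : FiniteDimensional ℂ (⊤ : Submodule ℂ V) := htop ▸ inferInstance
    exact Submodule.topEquiv.finiteDimensional
  let e : ℕ ↪ w := Set.Infinite.natEmbedding w hw
  refine ⟨fun n => ((b (e n) : V) : H), ?_, fun n => ((b (e n) : V)).2⟩
  have hON : Orthonormal ℂ (fun n => (b (e n) : V)) := b.orthonormal.comp e e.injective
  constructor
  · intro n
    show ‖((b (e n) : V) : H)‖ = 1
    rw [Submodule.norm_coe]
    exact hON.1 n
  · intro i j hij
    show (inner ℂ ((b (e i) : V) : H) ((b (e j) : V) : H) : ℂ) = 0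
    rw [← Submodule.coe_inner]
    exact hON.2 hij

private theorem aux_range_bound {H : Type*} [NormedAddCommGroup H] [InnerProductSpace ℂ H]
    [CompleteSpace H] [Nontrivial H]
    (T : H →L[ℂ] H) (hsa : IsSelfAdjoint T) (c : ℝ)
    (g : ℝ → ℝ) (hgc : Continuous g) (hg0 : ∀ t, 0 ≤ g t) (hgsupp : ∀ t, t ≤ c → g t = 0) :
    ∀ x : H, c * ‖cfc g T x‖ ^ 2 ≤ (⟪T (cfc g T x), cfc g T x⟫).re := by
  set A : H →L[ℂ] H := cfc g T with hA
  have hAsa : IsSelfAdjoint A := cfc_predicate g T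
  have hq : ∀ t : ℝ, 0 ≤ g t * ((t - c) * g t) := by
    intro t
    rcases le_total t c with h | h
    · simp [hgsupp t h]
    · exact mul_nonneg (hg0 t) (mul_nonneg (sub_nonneg.2 h) (hg0 t))
  have hP : (0 : H →L[ℂ] H) ≤ cfc (fun t => g t * ((t - c) * g t)) T :=
    cfc_nonneg fun t _ => hq t
  have hfact : cfc (fun t : ℝ => g t * ((t - c) * g t)) T
      = A * ((T - algebraMap ℝ (H →L[ℂ] H) c) * A) := by
    rw [cfc_mul _ _ T (by fun_prop) (by fun_prop),
        cfc_mul _ _ T (by fun_prop) (by fun_prop),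
        cfc_sub _ _ T (by fun_prop) (by fun_prop), cfc_id' ℝ T, cfc_const c T]
  intro x
  rw [hfact] at hP
  have hpos := ((ContinuousLinearMap.nonneg_iff_isPositive _).mp hP).re_inner_nonneg_left x
  have h1 : (A * ((T - algebraMap ℝ (H →L[ℂ] H) c) * A)) x
      = A ((T - algebraMap ℝ (H →L[ℂ] H) c) (A x)) := rfl
  have h2 : (⟪A ((T - algebraMap ℝ (H →L[ℂ] H) c) (A x)), x⟫ : ℂ)
      = ⟪(T - algebraMap ℝ (H →L[ℂ] H) c) (A x), A x⟫ := by
    nth_rewrite 1 [← hAsa.adjoint_eq]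
    rw [ContinuousLinearMap.adjoint_inner_left]
  have h3 : (T - algebraMap ℝ (H →L[ℂ] H) c) (A x) = T (A x) - (c : ℂ) • (A x) := by
    simp [Algebra.algebraMap_eq_smul_one]
  have hre : RCLike.re (⟪(A * ((T - algebraMap ℝ (H →L[ℂ] H) c) * A)) x, x⟫ : ℂ)
      = (⟪T (A x), A x⟫).re - c * ‖A x‖ ^ 2 := by
    rw [h1, h2, h3, inner_sub_left, inner_smul_left]
    simp only [map_sub, Complex.conj_ofReal, RCLike.re_to_complex, Complex.mul_re,
      Complex.ofReal_re, Complex.ofReal_im]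
    have hnrm : (⟪A x, A x⟫ : ℂ).re = ‖A x‖ ^ 2 := by
      rw [← inner_self_eq_norm_sq (𝕜 := ℂ)]; rfl
    rw [hnrm]
    have him : (⟪A x, A x⟫ : ℂ).im = 0 := inner_self_im (𝕜 := ℂ) (A x)
    rw [him]
    ring
  rw [hre] at hpos
  linarith

private theorem aux_cpt {H : Type*} [NormedAddCommGroup H] [InnerProductSpace ℂ H]
    [CompleteSpace H] [Nontrivial H]
    (T C : H →L[ℂ] H) (hsa : IsSelfAdjoint T) (c : ℝ)
    (g : ℝ → ℝ) (hgc : Continuous g) (hg0 : ∀ t, 0 ≤ g t) (hgsupp : ∀ t, t ≤ c → g t = 0)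
    (hCcpt : IsCompactOperator ⇑C) (hgap : ‖T - C‖ < c) :
    IsCompactOperator ⇑(cfc g T) := by
  set A : H →L[ℂ] H := cfc g T with hA
  set V : Submodule ℂ H := (LinearMap.range (A : H →ₗ[ℂ] H)).topologicalClosure with hV
  by_cases hfd : FiniteDimensional ℂ V
  · exact aux_finrank A V fun x =>
      Submodule.le_topologicalClosure _ (LinearMap.mem_range_self (A : H →ₗ[ℂ] H) x)
  exfalso
  obtain ⟨x, hON, hxV⟩ := aux_onseq V (Submodule.isClosed_topologicalClosure _) hfd
  have hxnorm : ∀ n, ‖x n‖ = 1 := hON.1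
  have hbound : ∀ y ∈ V, c * ‖y‖ ^ 2 ≤ (⟪T y, y⟫).re := by
    have hEc : IsClosed {y : H | c * ‖y‖ ^ 2 ≤ (⟪T y, y⟫).re} := by
      apply isClosed_le
      · fun_prop
      · apply Complex.continuous_re.comp
        exact Continuous.inner T.continuous continuous_id
    intro y hy
    have hsub : (V : Set H) ⊆ {y : H | c * ‖y‖ ^ 2 ≤ (⟪T y, y⟫).re} := by
      rw [Submodule.topologicalClosure_coe]
      apply closure_minimal _ hEc
      rintro _ ⟨z, rfl⟩
      exact aux_range_bound T hsa c g hgc hg0 hgsupp z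
    exact hsub hy
  set η : ℝ := (c - ‖T - C‖) / 2 with hη
  have hηpos : 0 < η := by simp [hη]; linarith
  have hsmall : ∃ n, ‖C (x n)‖ < η := by
    by_contra hcon
    push_neg at hcon
    have hf : IsCompactOperator ⇑(C.toLinearMap) := hCcpt
    have hK := hf.isCompact_closure_image_closedBall (𝕜₁ := ℂ) 1
    have hmem : ∀ n, C (x n) ∈ closure (⇑C.toLinearMap '' Metric.closedBall 0 1) := by
      intro n
      exact subset_closure ⟨x n, by simp [hxnorm n], rfl⟩
    obtain ⟨y, hy, φ, hφ, hlim⟩ := hK.tendsto_subseq hmem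
    have hyη : η ≤ ‖y‖ :=
      ge_of_tendsto' hlim.norm (fun k => hcon (φ k))
    have hy0 : y = 0 := by
      have hz : ∀ z : H, (⟪z, y⟫ : ℂ) = 0 := by
        intro z
        have h1 : Filter.Tendsto (fun k => (⟪z, C (x (φ k))⟫ : ℂ))
            Filter.atTop (𝓝 ⟪z, y⟫) := (tendsto_const_nhds.inner hlim)
        have h2 : Filter.Tendsto (fun n => (⟪z, C (x n)⟫ : ℂ)) Filter.atTop (𝓝 0) := by
          have hsum : Summable fun n => ‖(⟪x n, ContinuousLinearMap.adjoint C z⟫ : ℂ)‖ ^ 2 :=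
            hON.inner_products_summable _
          have h3 : Filter.Tendsto (fun n => ‖(⟪x n, ContinuousLinearMap.adjoint C z⟫ : ℂ)‖ ^ 2)
              Filter.atTop (𝓝 0) := hsum.tendsto_atTop_zero
          have h4 : Filter.Tendsto (fun n => ‖(⟪x n, ContinuousLinearMap.adjoint C z⟫ : ℂ)‖)
              Filter.atTop (𝓝 0) := by
            have := h3.sqrt
            simpa [Real.sqrt_sq (norm_nonneg _)] using this
          apply squeeze_zero_norm _ h4
          intro n
          have : (⟪z, C (x n)⟫ : ℂ) = ⟪ContinuousLinearMap.adjoint C z, x n⟫ := by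
            rw [ContinuousLinearMap.adjoint_inner_left]
          rw [this, ← inner_conj_symm (x n)]
          exact le_of_eq (RCLike.norm_conj _).symm
        exact tendsto_nhds_unique h1 (h2.comp (hφ.tendsto_atTop))
      have := hz y
      rwa [inner_self_eq_zero] at this
    rw [hy0] at hyη
    simp at hyη
    linarith
  obtain ⟨n, hn⟩ := hsmall
  have h1 : c ≤ (⟪T (x n), x n⟫).re := by
    have := hbound (x n) (hxV n)
    rwa [hxnorm n, one_pow, mul_one] at this
  have hsplit : (⟪T (x n), x n⟫).re
      = (⟪(T - C) (x n), x n⟫).re + (⟪C (x n), x n⟫).re := by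
    rw [ContinuousLinearMap.sub_apply, inner_sub_left]
    simp
  have h2 : (⟪(T - C) (x n), x n⟫).re ≤ ‖T - C‖ := by
    calc (⟪(T - C) (x n), x n⟫).re ≤ ‖(⟪(T - C) (x n), x n⟫ : ℂ)‖ := Complex.re_le_norm _
      _ ≤ ‖(T - C) (x n)‖ * ‖x n‖ := norm_inner_le_norm _ _
      _ ≤ (‖T - C‖ * ‖x n‖) * ‖x n‖ := by
          have := (T - C).le_opNorm (x n)
          nlinarith [norm_nonneg (x n)]
      _ = ‖T - C‖ := by rw [hxnorm n]; ring
  have h3 : (⟪C (x n), x n⟫).re ≤ ‖C (x n)‖ := by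
    calc (⟪C (x n), x n⟫).re ≤ ‖(⟪C (x n), x n⟫ : ℂ)‖ := Complex.re_le_norm _
      _ ≤ ‖C (x n)‖ * ‖x n‖ := norm_inner_le_norm _ _
      _ = ‖C (x n)‖ := by rw [hxnorm n, mul_one]
  have : c < c := by
    calc c ≤ (⟪T (x n), x n⟫).re := h1
      _ = (⟪(T - C) (x n), x n⟫).re + (⟪C (x n), x n⟫).re := hsplit
      _ ≤ ‖T - C‖ + ‖C (x n)‖ := add_le_add h2 h3
      _ < ‖T - C‖ + η := by linarith
      _ ≤ c := by rw [hη]; linarith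
  exact lt_irrefl c this

/-- Every positive bounded operator `T` with `‖T‖ ≥ 1` on a separable infinite-dimensional
complex Hilbert space has a positive compact best approximant from the closed unit ball of
`K(H)`. -/
theorem stmt_11 {H : Type*} [NormedAddCommGroup H] [InnerProductSpace ℂ H] [CompleteSpace H]
    [TopologicalSpace.SeparableSpace H] (hH : ¬ FiniteDimensional ℂ H)
    (T : H →L[ℂ] H) (hsa : ContinuousLinearMap.adjoint T = T)
    (hpos : ∀ x : H, 0 ≤ (⟪T x, x⟫).re) (hT : 1 ≤ ‖T‖) :
    ∃ K : H →L[ℂ] H, IsCompactOperator ⇑K ∧ ContinuousLinearMap.adjoint K = K ∧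
      (∀ x : H, 0 ≤ (⟪K x, x⟫).re) ∧ ‖K‖ ≤ 1 ∧
      ‖T - K‖ = Metric.infDist T {K' : H →L[ℂ] H | IsCompactOperator ⇑K' ∧ ‖K'‖ ≤ 1} := by
  haveI : Nontrivial H := by
    by_contra h
    rw [not_nontrivial_iff_subsingleton] at h
    exact hH (FiniteDimensional.of_rank_eq_zero (by simp [rank_subsingleton']))
  set S := {K' : H →L[ℂ] H | IsCompactOperator ⇑K' ∧ ‖K'‖ ≤ 1} with hSdef
  have hSne : S.Nonempty := by
    refine ⟨0, ⟨?_, by simp⟩⟩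
    show IsCompactOperator (fun _ : H => (0 : H))
    exact isCompactOperator_zero
  set m := Metric.infDist T S with hm
  have hm0 : 0 ≤ m := Metric.infDist_nonneg
  have hm1 : ‖T‖ - 1 ≤ m := by
    by_contra hcon
    push_neg at hcon
    obtain ⟨C, hC, hd⟩ := (Metric.infDist_lt_iff hSne).mp hcon
    rw [dist_eq_norm] at hd
    have h1 := norm_sub_norm_le T C
    have h2 := hC.2
    linarith
  have hTsa : IsSelfAdjoint T := ContinuousLinearMap.isSelfAdjoint_iff'.mpr hsa
  have hT0 : (0 : H →L[ℂ] H) ≤ T := by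
    rw [ContinuousLinearMap.nonneg_iff_isPositive]
    exact ⟨ContinuousLinearMap.isSelfAdjoint_iff_isSymmetric.mp hTsa, fun x => by simpa [ContinuousLinearMap.reApplyInnerSelf] using hpos x⟩
  have hspec : spectrum ℝ T ⊆ Set.Icc 0 ‖T‖ := by
    intro t ht
    refine ⟨spectrum_nonneg_of_nonneg hT0 ht, ?_⟩
    have := spectrum.norm_le_norm_of_mem ht
    calc t ≤ |t| := le_abs_self t
      _ = ‖t‖ := rfl
      _ ≤ ‖T‖ := this
  set f : ℝ → ℝ := fun t => min (max (t - m) 0) 1 with hf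
  have hfc : Continuous f := by fun_prop
  set K : H →L[ℂ] H := cfc f T with hK
  have hKsa : IsSelfAdjoint K := cfc_predicate f T
  have hK0 : (0 : H →L[ℂ] H) ≤ K := cfc_nonneg fun x _ => le_min (le_max_right _ _) zero_le_one
  have hKnorm : ‖K‖ ≤ 1 := norm_cfc_le zero_le_one fun x _ => by
    rw [Real.norm_eq_abs, abs_le]
    constructor
    · linarith [le_min (le_max_right (x - m) 0) (zero_le_one (α := ℝ)),
        min_le_right (max (x - m) 0) 1]
    · exact min_le_right _ _
  -- compactness of K
  have hKcpt : IsCompactOperator ⇑K := by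
    set g : ℕ → ℝ → ℝ := fun n t => min (max (t - (m + 1 / (n + 1))) 0) 1 with hg
    have hgc : ∀ n, Continuous (g n) := fun n => by fun_prop
    have hgnorm : ∀ n, ‖cfc (g n) T - K‖ ≤ 1 / (n + 1) := by
      intro n
      have hpos' : (0 : ℝ) < 1 / (n + 1) := by positivity
      have hsub : cfc (g n) T - K = cfc (fun t => g n t - f t) T := by
        rw [cfc_sub _ _ T (by fun_prop) (by fun_prop)]
      rw [hsub]
      apply norm_cfc_le (by positivity)
      intro t _
      rw [Real.norm_eq_abs]
      calc |g n t - f t| ≤ |max (t - (m + 1 / (n + 1))) 0 - max (t - m) 0| := by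
            simpa [hg, hf] using
              abs_min_sub_min_le_max (max (t - (m + 1/(n+1))) 0) 1 (max (t - m) 0) 1
        _ ≤ |(t - (m + 1 / (n + 1))) - (t - m)| := abs_max_sub_max_le_abs _ _ _
        _ = 1 / (n + 1) := by
            rw [show (t - (m + 1 / (n + 1))) - (t - m) = -(1 / (n + 1)) by ring, abs_neg,
              abs_of_pos hpos']
    apply isCompactOperator_of_tendsto (l := Filter.atTop) (F := fun n : ℕ => cfc (g n) T)
    · rw [tendsto_iff_dist_tendsto_zero]
      apply squeeze_zero (fun n => dist_nonneg) (fun n => ?_)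
        tendsto_one_div_add_atTop_nhds_zero_nat
      rw [dist_eq_norm]
      exact hgnorm n
    · apply Filter.Eventually.of_forall
      intro n
      have hlt : m < m + 1 / (n + 1) := by
        have : (0 : ℝ) < 1 / (n + 1) := by positivity
        linarith
      obtain ⟨C, hC, hd⟩ := (Metric.infDist_lt_iff hSne).mp (hm ▸ hlt)
      rw [dist_eq_norm] at hd
      exact aux_cpt T C hTsa (m + 1 / (n + 1)) (g n) (hgc n)
        (fun t => le_min (le_max_right _ _) zero_le_one)
        (fun t ht => by
          simp only [hg]
          rw [max_eq_right (by linarith), min_eq_left zero_le_one])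
        hC.1 hd
  -- norm identity
  have hTK : ‖T - K‖ ≤ m := by
    have hsub : T - K = cfc (fun t : ℝ => t - f t) T := by
      rw [cfc_sub _ _ T (by fun_prop) (by fun_prop), cfc_id' ℝ T]
    rw [hsub]
    apply norm_cfc_le hm0
    intro t ht
    obtain ⟨ht0, ht1⟩ := hspec ht
    rw [Real.norm_eq_abs, abs_le]
    constructor
    · have h1 : f t ≤ max (t - m) 0 := min_le_left _ _
      have h2 : max (t - m) 0 ≤ max t 0 := max_le_max (by linarith) le_rfl
      have h3 : max t 0 = t := max_eq_left ht0
      linarith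
    · rcases le_total t m with h | h
      · have : (0 : ℝ) ≤ f t := le_min (le_max_right _ _) zero_le_one
        linarith
      · rcases le_total (t - m) 1 with h' | h'
        · have : f t = t - m := by
            simp only [hf]
            rw [max_eq_left (by linarith), min_eq_left h']
          linarith
        · have : f t = 1 := by
            simp only [hf]
            rw [max_eq_left (by linarith), min_eq_right h']
          linarith
  have hmem : K ∈ S := ⟨hKcpt, hKnorm⟩
  have hge : m ≤ ‖T - K‖ := by
    have := Metric.infDist_le_dist_of_mem (x := T) hmem
    rwa [dist_eq_norm] at this
  refine ⟨K, hKcpt, ContinuousLinearMap.isSelfAdjoint_iff'.mp hKsa, ?_, hKnorm, ?_⟩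
  · intro x
    have := ((ContinuousLinearMap.nonneg_iff_isPositive K).mp hK0).re_inner_nonneg_left x
    simpa [ContinuousLinearMap.reApplyInnerSelf] using this
  · exact le_antisymm hTK hge
end

section
/- Let ℓ₁ be the Banach space of absolutely summable complex sequences. Then K(ℓ₁) is ball proximinal in B(ℓ₁): for every bounded linear operator T on ℓ₁ there exists a compact operator K on ℓ₁ with ‖K‖ ≤ 1 such that ‖T − K‖ = d(T, B_{K(ℓ₁)}); moreover d(T, B_{K(ℓ₁)}) = max{ ‖T‖ − 1, d(T, K(ℓ₁)) }. -/
open scoped ENNReal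
noncomputable section

namespace BallProx

abbrev E := lp (fun _ : ℕ => ℂ) 1

lemma hasSum_norm' (x : E) : HasSum (fun i => ‖x i‖) ‖x‖ := by
  have := lp.hasSum_norm (p := 1) (by norm_num) x
  simpa using this

lemma norm_eq_tsum (x : E) : ‖x‖ = ∑' i, ‖x i‖ := (hasSum_norm' x).tsum_eq.symm

lemma summable_norm (x : E) : Summable fun i => ‖x i‖ := (hasSum_norm' x).summable

/-- tail sum -/
def τ (x : E) (n : ℕ) : ℝ := ∑' k, ‖x (k + n)‖

lemma summable_tail (x : E) (n : ℕ) : Summable fun k => ‖x (k + n)‖ :=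
  (summable_nat_add_iff n).mpr (summable_norm x)

lemma τ_nonneg (x : E) (n : ℕ) : 0 ≤ τ x n :=
  tsum_nonneg fun _ => norm_nonneg _

lemma τ_zero (x : E) : τ x 0 = ‖x‖ := by
  simp [τ, norm_eq_tsum]

lemma τ_succ (x : E) (n : ℕ) : τ x n = ‖x n‖ + τ x (n + 1) := by
  have h := Summable.tsum_eq_zero_add (f := fun k => ‖x (k + n)‖) (summable_tail x n)
  simp only [τ] at *
  rw [h]
  congr 1
  · simp
  · exact tsum_congr fun k => by rw [show k + 1 + n = k + (n + 1) by omega]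

lemma τ_succ_le (x : E) (n : ℕ) : τ x (n + 1) ≤ τ x n := by
  rw [τ_succ x n]; linarith [norm_nonneg (x n)]

lemma τ_anti (x : E) : Antitone (τ x) :=
  antitone_nat_of_succ_le fun n => τ_succ_le x n

lemma τ_le_norm (x : E) (n : ℕ) : τ x n ≤ ‖x‖ := by
  rw [← τ_zero x]; exact τ_anti x (Nat.zero_le n)

lemma τ_tendsto (x : E) : Filter.Tendsto (τ x) Filter.atTop (nhds 0) :=
  tendsto_sum_nat_add fun i => ‖x i‖

lemma τ_add_le (x y : E) (n : ℕ) : τ (x + y) n ≤ τ x n + τ y n := by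
  have : ∀ k, ‖(x + y) (k + n)‖ ≤ ‖x (k + n)‖ + ‖y (k + n)‖ := by
    intro k
    rw [lp.coeFn_add]
    exact norm_add_le _ _
  calc τ (x + y) n ≤ ∑' k, (‖x (k + n)‖ + ‖y (k + n)‖) :=
        Summable.tsum_le_tsum this (summable_tail _ n) ((summable_tail x n).add (summable_tail y n))
    _ = τ x n + τ y n := Summable.tsum_add (summable_tail x n) (summable_tail y n)

lemma τ_lip (x y : E) (n : ℕ) : τ x n ≤ τ y n + ‖x - y‖ := by
  have h := τ_add_le y (x - y) n
  rw [show y + (x - y) = x by abel] at h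
  exact h.trans (by linarith [τ_le_norm (x - y) n])

lemma τ_smul (c : ℂ) (x : E) (n : ℕ) : τ (c • x) n = ‖c‖ * τ x n := by
  simp only [τ]
  rw [← tsum_mul_left]
  exact tsum_congr fun k => by rw [lp.coeFn_smul, Pi.smul_apply, norm_smul]

/-- standard basis -/
def e (j : ℕ) : E := lp.single 1 j (1 : ℂ)

lemma e_apply (j i : ℕ) : (e j) i = if i = j then 1 else 0 := by
  rcases eq_or_ne i j with h | h
  · subst h; simp [e, lp.single_apply_self]
  · simp [e, lp.single_apply_ne _ _ _ h, h]

lemma norm_e (j : ℕ) : ‖e j‖ = 1 := by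
  have := lp.norm_single (E := fun _ : ℕ => ℂ) (p := 1) (by norm_num) j (1 : ℂ)
  simpa [e] using this

lemma single_eq_smul (j : ℕ) (a : ℂ) : lp.single 1 j a = a • e j := by
  have := lp.single_smul (𝕜 := ℂ) (E := fun _ : ℕ => ℂ) 1 j a (1 : ℂ)
  rw [e, ← this, smul_eq_mul, mul_one]

lemma hasSum_expansion (x : E) : HasSum (fun j => (x j : ℂ) • e j) x := by
  have h := lp.hasSum_single (p := 1) (by norm_num) x
  refine h.congr_fun fun j => ?_
  exact (single_eq_smul j (x j)).symm

/-- operator norm bounded by sup of column norms -/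
lemma opNorm_le_of_columns (S : E →L[ℂ] E) {C : ℝ} (hC : 0 ≤ C)
    (h : ∀ j, ‖S (e j)‖ ≤ C) : ‖S‖ ≤ C := by
  refine ContinuousLinearMap.opNorm_le_bound S hC fun x => ?_
  have hx : HasSum (fun j => (x j : ℂ) • S (e j)) (S x) := by
    have := (hasSum_expansion x).mapL S
    simpa using this
  have hsum : Summable fun j => ‖(x j : ℂ) • S (e j)‖ := by
    apply Summable.of_nonneg_of_le (fun j => norm_nonneg _)
      (fun j => ?_) ((summable_norm x).mul_right C)
    rw [norm_smul]
    exact mul_le_mul_of_nonneg_left (h j) (norm_nonneg _)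
  calc ‖S x‖ = ‖∑' j, (x j : ℂ) • S (e j)‖ := by rw [hx.tsum_eq]
    _ ≤ ∑' j, ‖(x j : ℂ) • S (e j)‖ := norm_tsum_le_tsum_norm hsum
    _ ≤ ∑' j, ‖x j‖ * C := by
        refine Summable.tsum_le_tsum (fun j => ?_) hsum ((summable_norm x).mul_right C)
        rw [norm_smul]
        exact mul_le_mul_of_nonneg_left (h j) (norm_nonneg _)
    _ = C * ‖x‖ := by rw [tsum_mul_right, ← norm_eq_tsum, mul_comm]


section mkOp
variable {k : ℕ → E} {M : ℝ}

lemma mkOp_summable (hk : ∀ j, ‖k j‖ ≤ M) (x : E) :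
    Summable fun j => (x j : ℂ) • k j := by
  refine Summable.of_norm_bounded
    ((summable_norm x).mul_right M) fun j => ?_
  rw [norm_smul]
  exact mul_le_mul_of_nonneg_left (hk j) (norm_nonneg _)

lemma mkOp_summable_norm (hk : ∀ j, ‖k j‖ ≤ M) (x : E) :
    Summable fun j => ‖(x j : ℂ) • k j‖ := by
  refine Summable.of_nonneg_of_le (fun j => norm_nonneg _)
    (fun j => ?_) ((summable_norm x).mul_right M)
  rw [norm_smul]
  exact mul_le_mul_of_nonneg_left (hk j) (norm_nonneg _)

/-- operator built from columns -/
def mkOp (k : ℕ → E) (M : ℝ) (hM : 0 ≤ M) (hk : ∀ j, ‖k j‖ ≤ M) : E →L[ℂ] E :=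
  LinearMap.mkContinuous
    { toFun := fun x => ∑' j, (x j : ℂ) • k j
      map_add' := fun x y => by
        have h : ∀ j, ((x + y) j : ℂ) • k j = (x j : ℂ) • k j + (y j : ℂ) • k j := by
          intro j
          rw [lp.coeFn_add, Pi.add_apply, add_smul]
        calc (∑' j, ((x + y) j : ℂ) • k j)
            = ∑' j, ((x j : ℂ) • k j + (y j : ℂ) • k j) := tsum_congr h
          _ = _ := Summable.tsum_add (mkOp_summable hk x) (mkOp_summable hk y)
      map_smul' := fun c x => by
        have h : ∀ j, ((c • x) j : ℂ) • k j = c • ((x j : ℂ) • k j) := by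
          intro j
          rw [lp.coeFn_smul, Pi.smul_apply, smul_smul]; rfl
        simp only [RingHom.id_apply]
        calc (∑' j, ((c • x) j : ℂ) • k j)
            = ∑' j, c • ((x j : ℂ) • k j) := tsum_congr h
          _ = c • ∑' j, (x j : ℂ) • k j :=
              ((mkOp_summable hk x).hasSum.const_smul c).tsum_eq }
    M
    (fun x => by
      simp only [LinearMap.coe_mk, AddHom.coe_mk]
      calc ‖∑' j, (x j : ℂ) • k j‖ ≤ ∑' j, ‖(x j : ℂ) • k j‖ :=
            norm_tsum_le_tsum_norm (mkOp_summable_norm hk x)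
        _ ≤ ∑' j, ‖x j‖ * M := by
            refine Summable.tsum_le_tsum (fun j => ?_) (mkOp_summable_norm hk x)
              ((summable_norm x).mul_right M)
            rw [norm_smul]
            exact mul_le_mul_of_nonneg_left (hk j) (norm_nonneg _)
        _ = M * ‖x‖ := by rw [tsum_mul_right, ← norm_eq_tsum, mul_comm])

lemma mkOp_apply (hM : 0 ≤ M) (hk : ∀ j, ‖k j‖ ≤ M) (x : E) :
    mkOp k M hM hk x = ∑' j, (x j : ℂ) • k j := rfl

lemma mkOp_apply_e (hM : 0 ≤ M) (hk : ∀ j, ‖k j‖ ≤ M) (j : ℕ) :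
    mkOp k M hM hk (e j) = k j := by
  rw [mkOp_apply]
  rw [tsum_eq_single j]
  · rw [e_apply, if_pos rfl, one_smul]
  · intro i hij
    rw [e_apply, if_neg hij, zero_smul]

lemma norm_mkOp_le (hM : 0 ≤ M) (hk : ∀ j, ‖k j‖ ≤ M) : ‖mkOp k M hM hk‖ ≤ M :=
  LinearMap.mkContinuous_norm_le _ hM _

end mkOp


/-- head truncation -/
def head (n : ℕ) (y : E) : E := ∑ i ∈ Finset.range n, lp.single 1 i (y i)

lemma head_apply (n : ℕ) (y : E) (i : ℕ) :
    (head n y) i = if i < n then y i else 0 := by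
  simp only [head, lp.coeFn_sum, Finset.sum_apply]
  rcases lt_or_ge i n with h | h
  · rw [Finset.sum_eq_single i]
    · simp [lp.single_apply_self, h]
    · intro b _ hbi
      exact lp.single_apply_ne _ _ _ (Ne.symm hbi)
    · intro hi
      exact absurd (Finset.mem_range.mpr h) hi
  · rw [if_neg (not_lt.mpr h), Finset.sum_eq_zero]
    intro b hb
    have hb' := Finset.mem_range.mp hb
    exact lp.single_apply_ne _ _ _ (by omega : i ≠ b)

lemma norm_sub_head (n : ℕ) (y : E) : ‖y - head n y‖ = τ y n := by
  have h1 := lp.norm_compl_sum_single (p := 1) (by norm_num) y (Finset.range n)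
  simp only [ENNReal.toReal_one, Real.rpow_one] at h1
  have h2 : (∑ i ∈ Finset.range n, ‖y i‖) + τ y n = ‖y‖ := by
    rw [norm_eq_tsum]
    exact (summable_norm y).sum_add_tsum_nat_add n
  rw [head, h1]
  linarith

lemma head_norm_le (n : ℕ) (y : E) : ‖head n y‖ ≤ ‖y‖ := by
  have h1 := lp.norm_sum_single (p := 1) (by norm_num) (fun i => (y i : ℂ)) (Finset.range n)
  simp only [ENNReal.toReal_one, Real.rpow_one] at h1
  rw [head, h1, norm_eq_tsum]
  exact Summable.sum_le_tsum _ (fun i _ => norm_nonneg _) (summable_norm y)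


lemma single_sub (i : ℕ) (a b : ℂ) :
    (lp.single 1 i (a - b) : E) = lp.single 1 i a - lp.single 1 i b := by
  refine lp.ext (funext fun j => ?_)
  rcases eq_or_ne j i with h | h
  · subst h
    rw [lp.coeFn_sub, Pi.sub_apply]
    simp [lp.single_apply_self]
  · rw [lp.coeFn_sub, Pi.sub_apply]
    simp [lp.single_apply_ne _ _ _ h]

lemma isometry_single (i : ℕ) : Isometry (fun a : ℂ => (lp.single 1 i a : E)) := by
  intro a b
  rw [edist_dist, edist_dist]
  congr 1
  rw [dist_eq_norm, dist_eq_norm, ← single_sub]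
  exact lp.norm_single (E := fun _ : ℕ => ℂ) (p := 1) (by norm_num) i (a - b)

/-- coordinate evaluation -/
def coordCLM (i : ℕ) : E →L[ℂ] ℂ :=
  LinearMap.mkContinuous
    { toFun := fun y => y i
      map_add' := fun x y => by simp only [lp.coeFn_add, Pi.add_apply]
      map_smul' := fun c x => by
        simp only [lp.coeFn_smul, Pi.smul_apply, RingHom.id_apply, smul_eq_mul] }
    1
    (fun y => by
      rw [one_mul]; exact lp.norm_apply_le_norm (p := 1) one_ne_zero y i)

lemma coordCLM_apply (i : ℕ) (y : E) : coordCLM i y = y i := rfl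

/-- an operator whose range is supported on coordinates `< n` is compact -/
lemma isCompactOperator_of_support (F : E →L[ℂ] E) (n : ℕ)
    (h : ∀ x, ∀ i, n ≤ i → F x i = 0) : IsCompactOperator ⇑F := by
  set ι : (Fin n → ℂ) → E := fun v => ∑ i : Fin n, lp.single 1 (i : ℕ) (v i) with hι
  have hι_cont : Continuous ι := by
    refine continuous_finset_sum _ fun i _ => ?_
    exact (isometry_single (i : ℕ)).continuous.comp (continuous_apply i)
  have hC : IsCompact (ι '' Metric.closedBall 0 ‖F‖) :=
    (isCompact_closedBall 0 ‖F‖).image hι_cont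
  refine ⟨ι '' Metric.closedBall 0 ‖F‖, hC, ?_⟩
  refine Filter.mem_of_superset (Metric.closedBall_mem_nhds 0 one_pos) ?_
  intro x hx
  have hxn : ‖x‖ ≤ 1 := by simpa using hx
  refine (Set.mem_image _ _ _).mpr ⟨fun i => F x (i : ℕ), ?_, ?_⟩
  · rw [Metric.mem_closedBall, dist_zero_right]
    refine (pi_norm_le_iff_of_nonneg (norm_nonneg F)).mpr fun i => ?_
    calc ‖F x (i : ℕ)‖ ≤ ‖F x‖ := lp.norm_apply_le_norm one_ne_zero (F x) (i : ℕ)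
      _ ≤ ‖F‖ * ‖x‖ := F.le_opNorm x
      _ ≤ ‖F‖ := by nlinarith [norm_nonneg F]
  · have : ι (fun i => F x (i : ℕ)) = head n (F x) := by
      rw [hι, head, Finset.sum_range]
    rw [this]
    refine lp.ext (funext fun i => ?_)
    rw [head_apply]
    rcases lt_or_ge i n with hi | hi
    · rw [if_pos hi]
    · rw [if_neg (not_lt.mpr hi)]
      exact (h x i hi).symm

/-- uniform tail smallness of columns implies compact -/
lemma isCompactOperator_of_uniform_tail (S : E →L[ℂ] E)
    (h : ∀ ε > 0, ∃ n, ∀ j, τ (S (e j)) n ≤ ε) : IsCompactOperator ⇑S := by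
  have hmem : S ∈ closure {f : E →L[ℂ] E | IsCompactOperator ⇑f} := by
    rw [Metric.mem_closure_iff]
    intro ε hε
    obtain ⟨n, hn⟩ := h (ε / 2) (by linarith)
    have hbd : ∀ j, ‖head n (S (e j))‖ ≤ ‖S‖ := by
      intro j
      refine (head_norm_le n _).trans ?_
      calc ‖S (e j)‖ ≤ ‖S‖ * ‖e j‖ := S.le_opNorm _
        _ ≤ ‖S‖ := by
            rw [norm_e, mul_one]
    set F : E →L[ℂ] E := mkOp (fun j => head n (S (e j))) ‖S‖ (norm_nonneg S) hbd with hF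
    refine ⟨F, ?_, ?_⟩
    · refine isCompactOperator_of_support F n fun x i hi => ?_
      have hs : HasSum (fun j => (x j : ℂ) • head n (S (e j))) (F x) := by
        rw [hF, mkOp_apply]
        exact (mkOp_summable hbd x).hasSum
      have hs2 := hs.mapL (coordCLM i)
      have hz : ∀ j, coordCLM i ((x j : ℂ) • head n (S (e j))) = 0 := by
        intro j
        rw [map_smul, coordCLM_apply, head_apply, if_neg (not_lt.mpr hi), smul_zero]
      have hs3 : HasSum (fun _ : ℕ => (0 : ℂ)) (coordCLM i (F x)) := by
        rw [show (fun _ : ℕ => (0 : ℂ)) = fun j => coordCLM i ((x j : ℂ) • head n (S (e j)))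
          from funext fun j => (hz j).symm]
        exact hs2
      exact (hasSum_zero.unique hs3).symm
    · rw [dist_eq_norm]
      have : ‖S - F‖ ≤ ε / 2 := by
        refine opNorm_le_of_columns _ (by linarith) fun j => ?_
        rw [ContinuousLinearMap.sub_apply, hF, mkOp_apply_e, norm_sub_head]
        exact hn j
      linarith
  exact isClosed_setOf_isCompactOperator.closure_subset hmem



lemma compact_set_uniform_tail {C : Set E} (hC : IsCompact C) :
    ∀ ε > 0, ∃ n, ∀ y ∈ C, τ y n ≤ ε := by
  intro ε hε
  obtain ⟨t, ht, hcov⟩ := Metric.totallyBounded_iff.mp hC.totallyBounded (ε / 2) (by linarith)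
  have hn : ∀ y : E, ∃ n, τ y n ≤ ε / 2 := by
    intro y
    have := (τ_tendsto y).eventually (eventually_le_nhds (by linarith : (0:ℝ) < ε / 2))
    obtain ⟨n, hn⟩ := this.exists
    exact ⟨n, hn⟩
  choose nf hnf using hn
  obtain ⟨N, hN⟩ := (ht.image nf).bddAbove
  refine ⟨N, fun z hz => ?_⟩
  obtain ⟨y, hyt, hzy⟩ := Set.mem_iUnion₂.mp (hcov hz)
  have h1 : τ y N ≤ ε / 2 := by
    refine le_trans (τ_anti y ?_) (hnf y)
    exact hN (Set.mem_image_of_mem nf hyt)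
  have h2 : ‖z - y‖ < ε / 2 := by
    rw [← dist_eq_norm]
    exact Metric.mem_ball.mp hzy
  linarith [τ_lip z y N]

lemma uniform_tail_of_isCompactOperator (S : E →L[ℂ] E) (hS : IsCompactOperator ⇑S) :
    ∀ ε > 0, ∃ n, ∀ j, τ (S (e j)) n ≤ ε := by
  obtain ⟨C, hC, hpre⟩ := hS
  obtain ⟨δ, hδ, hball⟩ := Metric.mem_nhds_iff.mp hpre
  intro ε hε
  obtain ⟨n, hn⟩ := compact_set_uniform_tail hC (δ / 2 * ε) (by positivity)
  refine ⟨n, fun j => ?_⟩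
  have hmem : ((δ / 2 : ℝ) : ℂ) • e j ∈ Metric.ball (0 : E) δ := by
    rw [mem_ball_zero_iff, norm_smul, norm_e, mul_one]
    simp only [Complex.norm_real, Real.norm_eq_abs]
    rw [abs_of_pos (by linarith)]
    linarith
  have hSC : S (((δ / 2 : ℝ) : ℂ) • e j) ∈ C := hball hmem
  have h1 : τ (S (((δ / 2 : ℝ) : ℂ) • e j)) n ≤ δ / 2 * ε := hn _ hSC
  rw [map_smul, τ_smul, Complex.norm_real, Real.norm_eq_abs, abs_of_pos (by linarith : (0:ℝ) < δ / 2)] at h1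
  nlinarith [τ_nonneg (S (e j)) n]


/-! ### The tail-cut construction -/

/-- truncated tail function -/
def g (x : E) (t : ℝ) (n : ℕ) : ℝ := max (τ x n - t) 0

lemma g_nonneg (x : E) (t : ℝ) (n : ℕ) : 0 ≤ g x t n := le_max_right _ _

lemma g_succ_le (x : E) (t : ℝ) (n : ℕ) : g x t (n + 1) ≤ g x t n :=
  max_le_max (by linarith [τ_succ_le x n]) le_rfl

lemma g_diff_nonneg (x : E) (t : ℝ) (n : ℕ) : 0 ≤ g x t n - g x t (n + 1) := by
  linarith [g_succ_le x t n]

lemma g_diff_le (x : E) (t : ℝ) (n : ℕ) : g x t n - g x t (n + 1) ≤ ‖x n‖ := by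
  have h := abs_max_sub_max_le_abs (τ x n - t) (τ x (n + 1) - t) 0
  have h2 : τ x n - t - (τ x (n + 1) - t) = ‖x n‖ := by linarith [τ_succ x n]
  rw [h2] at h
  have h3 := le_of_abs_le h
  rw [abs_of_nonneg (norm_nonneg (x n))] at h3
  exact le_trans h3 le_rfl

lemma g_tendsto (x : E) {t : ℝ} (ht : 0 ≤ t) :
    Filter.Tendsto (g x t) Filter.atTop (nhds 0) := by
  have h1 : Filter.Tendsto (fun n => τ x n - t) Filter.atTop (nhds (0 - t)) :=
    (τ_tendsto x).sub_const t
  have h2 := h1.max (tendsto_const_nhds (x := (0 : ℝ)))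
  rw [show max (0 - t) 0 = 0 by rw [zero_sub]; exact max_eq_right (by linarith)] at h2
  exact h2

/-- the cut sequence -/
def cutfun (x : E) (t : ℝ) (n : ℕ) : ℂ :=
  if x n = 0 then 0
  else (((g x t n - g x t (n + 1)) / ‖x n‖ : ℝ) : ℂ) * x n

lemma norm_cutfun (x : E) (t : ℝ) (n : ℕ) :
    ‖cutfun x t n‖ = g x t n - g x t (n + 1) := by
  unfold cutfun
  rcases eq_or_ne (x n) 0 with h | h
  · rw [if_pos h]
    have hτ : τ x n = τ x (n + 1) := by
      have := τ_succ x n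
      rw [h] at this
      simpa using this
    simp [g, hτ]
  · rw [if_neg h, norm_mul, Complex.norm_real, Real.norm_eq_abs,
      abs_of_nonneg (div_nonneg (g_diff_nonneg x t n) (norm_nonneg _))]
    rw [div_mul_eq_mul_div, mul_div_assoc, div_self (norm_ne_zero_iff.mpr h), mul_one]

lemma norm_cutfun_le (x : E) (t : ℝ) (n : ℕ) : ‖cutfun x t n‖ ≤ ‖x n‖ := by
  rw [norm_cutfun]
  exact g_diff_le x t n

lemma cutfun_memℓp (x : E) (t : ℝ) : Memℓp (cutfun x t) 1 := by
  apply memℓp_gen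
  simp only [ENNReal.toReal_one, Real.rpow_one]
  exact Summable.of_nonneg_of_le (fun n => norm_nonneg _) (norm_cutfun_le x t) (summable_norm x)

/-- the cut element of `ℓ¹` -/
def cutL (x : E) (t : ℝ) : E := ⟨cutfun x t, cutfun_memℓp x t⟩

lemma cutL_apply (x : E) (t : ℝ) (n : ℕ) : (cutL x t) n = cutfun x t n := rfl

/-- telescoping sum -/
lemma hasSum_telescope {f : ℕ → ℝ} (hf : ∀ n, f (n + 1) ≤ f n)
    (h0 : Filter.Tendsto f Filter.atTop (nhds 0)) :
    HasSum (fun n => f n - f (n + 1)) (f 0) := by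
  rw [hasSum_iff_tendsto_nat_of_nonneg (fun i => by linarith [hf i])]
  have : ∀ n, ∑ i ∈ Finset.range n, (f i - f (i + 1)) = f 0 - f n :=
    fun n => Finset.sum_range_sub' f n
  rw [funext this]
  have := (tendsto_const_nhds (x := f 0)).sub h0
  simpa using this

lemma τ_cutL {x : E} {t : ℝ} (ht : 0 ≤ t) (n : ℕ) : τ (cutL x t) n = g x t n := by
  have key : HasSum (fun k => g x t (k + n) - g x t (k + n + 1)) (g x t n) := by
    have hmono : ∀ k, (fun k => g x t (k + n)) (k + 1) ≤ (fun k => g x t (k + n)) k := by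
      intro k
      simp only []
      rw [show k + 1 + n = k + n + 1 by omega]
      exact g_succ_le x t (k + n)
    have hlim : Filter.Tendsto (fun k => g x t (k + n)) Filter.atTop (nhds 0) :=
      (g_tendsto x ht).comp (Filter.tendsto_add_atTop_nat n)
    have h := hasSum_telescope hmono hlim
    simp only [zero_add] at h
    have hfe : (fun k => g x t (k + n) - g x t (k + 1 + n))
        = fun k => g x t (k + n) - g x t (k + n + 1) := by
      funext k
      rw [show k + 1 + n = k + n + 1 by omega]
    rw [hfe] at h
    exact h
  have hcongr : (fun k => ‖(cutL x t) (k + n)‖) = fun k => g x t (k + n) - g x t (k + n + 1) :=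
    funext fun k => by rw [cutL_apply, norm_cutfun]
  unfold τ
  rw [hcongr]
  exact key.tsum_eq

lemma norm_cutL {x : E} {t : ℝ} (ht : 0 ≤ t) : ‖cutL x t‖ = max (‖x‖ - t) 0 := by
  rw [← τ_zero (cutL x t), τ_cutL ht 0, g, τ_zero]

lemma norm_sub_cutL {x : E} {t : ℝ} (ht : 0 ≤ t) :
    ‖x - cutL x t‖ = ‖x‖ - max (‖x‖ - t) 0 := by
  have hpt : ∀ n, ‖(x - cutL x t) n‖ = ‖x n‖ - ‖(cutL x t) n‖ := by
    intro n
    rw [lp.coeFn_sub, Pi.sub_apply, cutL_apply]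
    unfold cutfun
    rcases eq_or_ne (x n) 0 with h | h
    · rw [if_pos h, h]
      simp
    · rw [if_neg h]
      set r : ℝ := (g x t n - g x t (n + 1)) / ‖x n‖ with hr
      have hr0 : 0 ≤ r := div_nonneg (g_diff_nonneg x t n) (norm_nonneg _)
      have hr1 : r ≤ 1 := by
        rw [hr, div_le_one (norm_pos_iff.mpr h)]
        exact g_diff_le x t n
      have : x n - (r : ℂ) * x n = ((1 - r : ℝ) : ℂ) * x n := by
        push_cast
        ring
      rw [this, norm_mul, Complex.norm_real, Real.norm_eq_abs, abs_of_nonneg (by linarith),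
        norm_mul, Complex.norm_real, Real.norm_eq_abs, abs_of_nonneg hr0]
      ring
  calc ‖x - cutL x t‖ = ∑' n, ‖(x - cutL x t) n‖ := norm_eq_tsum _
    _ = ∑' n, (‖x n‖ - ‖(cutL x t) n‖) := tsum_congr hpt
    _ = ‖x‖ - ‖cutL x t‖ := by
        rw [Summable.tsum_sub (summable_norm x) (summable_norm (cutL x t)),
          ← norm_eq_tsum, ← norm_eq_tsum]
    _ = ‖x‖ - max (‖x‖ - t) 0 := by rw [norm_cutL ht]


lemma norm_column_le (T : E →L[ℂ] E) (j : ℕ) : ‖T (e j)‖ ≤ ‖T‖ := by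
  calc ‖T (e j)‖ ≤ ‖T‖ * ‖e j‖ := T.le_opNorm _
    _ = ‖T‖ := by rw [norm_e, mul_one]

end BallProx

open BallProx in
/-- `K(ℓ₁)` is ball proximinal in `B(ℓ₁)`: every bounded operator `T` on `ℓ₁` has a best
approximation from the closed unit ball of the compact operators, and
`d(T, B_{K(ℓ₁)}) = max (‖T‖ - 1) (d(T, K(ℓ₁)))`. -/
theorem stmt_14 (T : lp (fun _ : ℕ => ℂ) 1 →L[ℂ] lp (fun _ : ℕ => ℂ) 1) :
    (∃ K : lp (fun _ : ℕ => ℂ) 1 →L[ℂ] lp (fun _ : ℕ => ℂ) 1,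
      IsCompactOperator ⇑K ∧ ‖K‖ ≤ 1 ∧
      ‖T - K‖ = Metric.infDist T
        {K' : lp (fun _ : ℕ => ℂ) 1 →L[ℂ] lp (fun _ : ℕ => ℂ) 1 |
          IsCompactOperator ⇑K' ∧ ‖K'‖ ≤ 1}) ∧
    Metric.infDist T
        {K' : lp (fun _ : ℕ => ℂ) 1 →L[ℂ] lp (fun _ : ℕ => ℂ) 1 |
          IsCompactOperator ⇑K' ∧ ‖K'‖ ≤ 1}
      = max (‖T‖ - 1)
          (Metric.infDist T
            {K' : lp (fun _ : ℕ => ℂ) 1 →L[ℂ] lp (fun _ : ℕ => ℂ) 1 |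
              IsCompactOperator ⇑K'}) := by
  classical
  set KS : Set (E →L[ℂ] E) := {K' | IsCompactOperator ⇑K'} with hKS
  set BS : Set (E →L[ℂ] E) := {K' | IsCompactOperator ⇑K' ∧ ‖K'‖ ≤ 1} with hBS
  have hzero : IsCompactOperator ⇑(0 : E →L[ℂ] E) := by
    have h0 : ⇑(0 : E →L[ℂ] E) = (0 : E → E) := rfl
    rw [h0]
    exact isCompactOperator_zero
  have hKSne : KS.Nonempty := ⟨0, hzero⟩
  have hBSne : BS.Nonempty := ⟨0, hzero, by simp⟩
  set D : ℝ := Metric.infDist T KS with hD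
  have hD0 : 0 ≤ D := Metric.infDist_nonneg
  set m : ℝ := max (‖T‖ - 1) D with hm
  have hm0 : 0 ≤ m := le_trans hD0 (le_max_right _ _)
  -- columns and cut levels
  set c : ℕ → E := fun j => T (e j) with hc
  set t : ℕ → ℝ := fun j => max D (‖c j‖ - 1) with ht
  have ht0 : ∀ j, 0 ≤ t j := fun j => le_trans hD0 (le_max_left _ _)
  set k : ℕ → E := fun j => cutL (c j) (t j) with hk
  have hk_norm : ∀ j, ‖k j‖ ≤ 1 := by
    intro j
    rw [hk, norm_cutL (ht0 j)]
    refine max_le ?_ zero_le_one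
    have : ‖c j‖ - 1 ≤ t j := le_max_right _ _
    linarith
  set K : E →L[ℂ] E := mkOp k 1 zero_le_one hk_norm with hKdef
  have hKe : ∀ j, K (e j) = k j := fun j => mkOp_apply_e zero_le_one hk_norm j
  have hKnorm : ‖K‖ ≤ 1 := norm_mkOp_le zero_le_one hk_norm
  -- ‖T - K‖ ≤ m
  have htm : ∀ j, t j ≤ m := by
    intro j
    refine max_le (le_max_right _ _) ?_
    refine le_trans ?_ (le_max_left (‖T‖ - 1) D)
    have h : ‖c j‖ ≤ ‖T‖ := norm_column_le T j
    linarith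
  have hTK : ‖T - K‖ ≤ m := by
    refine opNorm_le_of_columns _ hm0 fun j => ?_
    rw [ContinuousLinearMap.sub_apply, hKe j]
    show ‖c j - k j‖ ≤ m
    have h1 : ‖c j - k j‖ = ‖c j‖ - max (‖c j‖ - t j) 0 := norm_sub_cutL (ht0 j)
    rw [h1]
    have h2 : ‖c j‖ - t j ≤ max (‖c j‖ - t j) 0 := le_max_left _ _
    linarith [htm j]
  -- K is compact
  have hKcomp : IsCompactOperator ⇑K := by
    refine isCompactOperator_of_uniform_tail K fun ε hε => ?_
    have hlt : D < D + ε / 2 := by linarith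
    obtain ⟨S, hSmem, hSdist⟩ := (Metric.infDist_lt_iff hKSne).mp hlt
    obtain ⟨n, hn⟩ := uniform_tail_of_isCompactOperator S hSmem (ε / 2) (by linarith)
    refine ⟨n, fun j => ?_⟩
    have hcol : ‖c j - S (e j)‖ < D + ε / 2 := by
      have h1 : ‖(T - S) (e j)‖ ≤ ‖T - S‖ := norm_column_le (T - S) j
      have h2 : (T - S) (e j) = c j - S (e j) := rfl
      rw [h2] at h1
      rw [dist_eq_norm] at hSdist
      linarith
    have hτc : τ (c j) n < D + ε := by
      have := τ_lip (c j) (S (e j)) n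
      linarith [hn j]
    have hτk : τ (K (e j)) n = max (τ (c j) n - t j) 0 := by
      rw [hKe j, hk]
      exact τ_cutL (ht0 j) n
    rw [hτk]
    refine max_le ?_ (by linarith)
    have : D ≤ t j := le_max_left _ _
    linarith
  -- lower bounds
  have hsub : BS ⊆ KS := fun f hf => hf.1
  have hlow1 : D ≤ Metric.infDist T BS := Metric.infDist_le_infDist_of_subset hsub hBSne
  have hlow2 : ‖T‖ - 1 ≤ Metric.infDist T BS := by
    by_contra hcon
    push_neg at hcon
    obtain ⟨y, hy, hdy⟩ := (Metric.infDist_lt_iff hBSne).mp hcon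
    rw [dist_eq_norm] at hdy
    have h1 := norm_sub_norm_le T y
    have hy1 : ‖y‖ ≤ 1 := hy.2
    linarith
  have hlowm : m ≤ Metric.infDist T BS := max_le hlow2 hlow1
  have hup : Metric.infDist T BS ≤ ‖T - K‖ := by
    have hKBS : K ∈ BS := ⟨hKcomp, hKnorm⟩
    have := Metric.infDist_le_dist_of_mem (x := T) hKBS
    rwa [dist_eq_norm] at this
  have heq1 : Metric.infDist T BS = m := le_antisymm (le_trans hup hTK) hlowm
  have heq2 : ‖T - K‖ = Metric.infDist T BS := le_antisymm (heq1 ▸ hTK) hup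
  exact ⟨⟨K, hKcomp, hKnorm, heq2⟩, by rw [heq1, hm, hD, hKS]⟩
end
end

section
/- Let H be an infinite-dimensional complex Hilbert space and let T be a bounded linear operator on H with ‖T‖ > 1 that does not attain its norm, i.e. ‖Tx‖ < ‖T‖ for every unit vector x ∈ H. Then d(T, B_{K(H)}) = ‖T‖; in particular, 0 is a best approximation to T from the closed unit ball of K(H). -/
open Metric Filter Topology ContinuousLinearMap NormedSpace

local notation "⟪" x ", " y "⟫" => @inner ℂ _ _ x y

private lemma cluster_apply' {α β : Type*} [TopologicalSpace α] [TopologicalSpace β] [T2Space β]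
    {p : ℕ → α} {a : α} (hcl : ClusterPt a (Filter.map p atTop)) {φ : α → β} (hφ : Continuous φ)
    {L : β} (hL : Tendsto (fun n => φ (p n)) atTop (𝓝 L)) : φ a = L := by
  have h1 : ClusterPt (φ a) (Filter.map (fun n => φ (p n)) atTop) := by
    have := hcl.map hφ.continuousAt (Filter.tendsto_map (f := φ))
    rwa [Filter.map_map] at this
  exact eq_of_nhds_neBot (h1.mono hL)

private lemma cluster_mem' {α β : Type*} [TopologicalSpace α] [TopologicalSpace β]
    {p : ℕ → α} {a : α} (hcl : ClusterPt a (Filter.map p atTop)) {φ : α → β} (hφ : Continuous φ)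
    {s : Set β} (hs : IsClosed s) (h : ∀ᶠ n in atTop, φ (p n) ∈ s) : φ a ∈ s := by
  have h1 : ClusterPt (φ a) (Filter.map (fun n => φ (p n)) atTop) := by
    have := hcl.map hφ.continuousAt (Filter.tendsto_map (f := φ))
    rwa [Filter.map_map] at this
  have h2 : Filter.map (fun n => φ (p n)) atTop ≤ 𝓟 s := le_principal_iff.2 h
  have h3 := h1.mono h2
  rwa [← mem_closure_iff_clusterPt, hs.closure_eq] at h3

set_option maxHeartbeats 2000000 in
private lemma key_lemma {H : Type*} [NormedAddCommGroup H] [InnerProductSpace ℂ H]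
    [CompleteSpace H] (T : H →L[ℂ] H) (hT : 1 < ‖T‖)
    (hna : ∀ x : H, ‖x‖ = 1 → ‖T x‖ < ‖T‖)
    (K : H →L[ℂ] H) (hK : IsCompactOperator ⇑K) : ‖T‖ ≤ ‖T - K‖ := by
  by_contra hlt
  push_neg at hlt
  set δ : ℝ := ‖T‖ - ‖T - K‖ with hδdef
  have hδ : 0 < δ := by simp only [hδdef]; linarith
  -- Step 1: almost norming unit vectors
  have hx : ∀ n : ℕ, ∃ x : H, ‖x‖ = 1 ∧ ‖T‖ - 1 / (n + 1) < ‖T x‖ := by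
    intro n
    have hpos : (0:ℝ) < 1 / (n + 1) := by positivity
    have hle1 : (1:ℝ) / (n + 1) ≤ 1 := by
      rw [div_le_one (by positivity)]; linarith [Nat.cast_nonneg (α := ℝ) n]
    have h1 : ‖T‖ - 1 / (n + 1) < ‖T‖ := by linarith
    obtain ⟨y, hy1, hy2⟩ := T.exists_lt_apply_of_lt_opNorm h1
    have hyc : (0:ℝ) < ‖T‖ - 1 / (n + 1) := by linarith
    have hy0 : y ≠ 0 := by
      intro h; rw [h] at hy2; simp at hy2
      rw [one_div] at hle1; linarith
    have hyn : 0 < ‖y‖ := norm_pos_iff.2 hy0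
    refine ⟨((‖y‖ : ℂ))⁻¹ • y, ?_, ?_⟩
    · rw [norm_smul, norm_inv, Complex.norm_real, Real.norm_eq_abs, abs_of_pos hyn,
        inv_mul_cancel₀ hyn.ne']
    · rw [map_smul, norm_smul, norm_inv, Complex.norm_real, Real.norm_eq_abs, abs_of_pos hyn]
      have h2 : (1:ℝ) ≤ ‖y‖⁻¹ := by
        rw [le_inv_comm₀ one_pos hyn]; simpa using hy1.le
      calc ‖T‖ - 1 / (n + 1) < ‖T y‖ := hy2
        _ ≤ ‖y‖⁻¹ * ‖T y‖ := le_mul_of_one_le_left (norm_nonneg _) h2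
  choose x hx1 hx2 using hx
  -- Step 2: ‖T xₙ‖ → ‖T‖
  have hub : ∀ n, ‖T (x n)‖ ≤ ‖T‖ := fun n => by
    simpa [hx1 n] using T.le_opNorm (x n)
  have hTx : Tendsto (fun n => ‖T (x n)‖) atTop (𝓝 ‖T‖) := by
    have hlo : Tendsto (fun n : ℕ => ‖T‖ - 1 / (n + 1)) atTop (𝓝 ‖T‖) := by
      simpa using tendsto_const_nhds.sub (tendsto_one_div_add_atTop_nhds_zero_nat (𝕜 := ℝ))
    exact tendsto_of_tendsto_of_tendsto_of_le_of_le hlo tendsto_const_nhds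
      (fun n => (hx2 n).le) hub
  -- Step 3: (T†T) xₙ - s xₙ → 0
  set S := adjoint T ∘L T with hSdef
  set s : ℝ := ‖T‖ ^ 2 with hsdef
  have hs0 : 0 < s := by positivity
  have hSnorm : ‖S‖ = s := by rw [hSdef, norm_adjoint_comp_self, hsdef, sq]
  have hSinner : ∀ z w : H, ⟪S z, w⟫ = ⟪T z, T w⟫ := fun z w => by
    rw [hSdef, comp_apply, adjoint_inner_left]
  have hSinner' : ∀ z w : H, ⟪z, S w⟫ = ⟪T z, T w⟫ := fun z w => by
    rw [hSdef, comp_apply, adjoint_inner_right]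
  have hb : ∀ n, ‖S (x n) - ((s:ℂ)) • x n‖ ^ 2 ≤ 2 * s * (s - ‖T (x n)‖ ^ 2) := by
    intro n
    have e1 : RCLike.re ⟪S (x n), ((s:ℂ)) • x n⟫ = s * ‖T (x n)‖ ^ 2 := by
      rw [inner_smul_right, hSinner, inner_self_eq_norm_sq_to_K]
      simp [RCLike.re_eq_complex_re, ← Complex.ofReal_pow, ← Complex.ofReal_mul]
    have e2 : ‖S (x n)‖ ≤ s := by
      calc ‖S (x n)‖ ≤ ‖S‖ * ‖x n‖ := S.le_opNorm _
        _ = s := by rw [hSnorm, hx1 n, mul_one]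
    have e3 : ‖((s:ℂ)) • x n‖ = s := by
      rw [norm_smul, Complex.norm_real, Real.norm_eq_abs, abs_of_pos hs0, hx1 n, mul_one]
    have e4 := norm_sub_sq (𝕜 := ℂ) (S (x n)) (((s:ℂ)) • x n)
    rw [e4, e1, e3]
    nlinarith [e2, norm_nonneg (S (x n))]
  have hzero : Tendsto (fun n => ‖S (x n) - ((s:ℂ)) • x n‖) atTop (𝓝 0) := by
    have hsq : Tendsto (fun n => 2 * s * (s - ‖T (x n)‖ ^ 2)) atTop (𝓝 0) := by
      have : Tendsto (fun n => ‖T (x n)‖ ^ 2) atTop (𝓝 s) := by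
        simpa [hsdef] using hTx.pow 2
      have h5 : Tendsto (fun n => 2 * s * (s - ‖T (x n)‖ ^ 2)) atTop (𝓝 (2 * s * (s - s))) :=
        tendsto_const_nhds.mul (tendsto_const_nhds.sub this)
      simpa using h5
    have hle : ∀ n, ‖S (x n) - ((s:ℂ)) • x n‖ ≤ Real.sqrt (2 * s * (s - ‖T (x n)‖ ^ 2)) :=
      fun n => Real.le_sqrt_of_sq_le (hb n)
    have hsq' : Tendsto (fun n => Real.sqrt (2 * s * (s - ‖T (x n)‖ ^ 2))) atTop (𝓝 0) := by
      have := (Real.continuous_sqrt.tendsto 0).comp hsq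
      simpa [Function.comp_def] using this
    exact squeeze_zero (fun n => norm_nonneg _) hle hsq'
  -- inner products against the sequence tend to zero
  have hv0 : ∀ v : H, Tendsto (fun n => ⟪S (x n) - ((s:ℂ)) • x n, v⟫) atTop (𝓝 0) := by
    intro v
    refine squeeze_zero_norm (fun n => norm_inner_le_norm _ _) ?_
    simpa using hzero.mul_const ‖v‖
  -- Step 4: cluster point in the product of weak-star ball and compact image
  set D : Set H := closure (⇑K '' closedBall 0 1) with hDdef
  have hKlin : IsCompactOperator ⇑(K : H →ₗ[ℂ] H) := by
    rwa [ContinuousLinearMap.coe_coe]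
  have hD : IsCompact D := hKlin.isCompact_closure_image_closedBall 1
  set B : Set (WeakDual ℂ H) := WeakDual.toStrongDual ⁻¹' closedBall 0 1 with hBdef
  have hB : IsCompact B := WeakDual.isCompact_closedBall (𝕜 := ℂ) (E := H) 0 1
  set g : ℕ → WeakDual ℂ H :=
    fun n => StrongDual.toWeakDual (InnerProductSpace.toDual ℂ H (x n)) with hgdef
  have hg : ∀ n, ∀ v : H, g n v = ⟪x n, v⟫ := fun n v => rfl
  set p : ℕ → WeakDual ℂ H × H := fun n => (g n, K (x n)) with hpdef
  have hmem : ∀ n, p n ∈ B ×ˢ D := by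
    intro n
    constructor
    · show WeakDual.toStrongDual (g n) ∈ closedBall 0 1
      rw [mem_closedBall_zero_iff]
      show ‖InnerProductSpace.toDual ℂ H (x n)‖ ≤ 1
      rw [(InnerProductSpace.toDual ℂ H).norm_map, hx1 n]
    · exact subset_closure ⟨x n, by simp [hx1 n], rfl⟩
  have hmem' : ∀ᶠ n in atTop, p n ∈ B ×ˢ D := Filter.Eventually.of_forall hmem
  have hle : Filter.map p atTop ≤ 𝓟 (B ×ˢ D) := le_principal_iff.2 hmem'
  obtain ⟨⟨f₀, y⟩, hq, hcl⟩ := (hB.prod hD) hle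
  -- the candidate eigenvector
  set x₀ : H := (InnerProductSpace.toDual ℂ H).symm (WeakDual.toStrongDual f₀) with hx₀def
  have hx₀ : ∀ v : H, ⟪x₀, v⟫ = f₀ v := by
    intro v
    have : InnerProductSpace.toDual ℂ H x₀ = WeakDual.toStrongDual f₀ :=
      (InnerProductSpace.toDual ℂ H).apply_symm_apply _
    calc ⟪x₀, v⟫ = (InnerProductSpace.toDual ℂ H x₀) v := (InnerProductSpace.toDual_apply_apply).symm
      _ = f₀ v := by rw [this]; rfl
  -- eigenvector equation
  have heig : ∀ v : H, ⟪x₀, S v⟫ = ((s:ℂ)) * ⟪x₀, v⟫ := by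
    intro v
    have hφ : Continuous fun q : WeakDual ℂ H × H => q.1 (S v) - ((s:ℂ)) * q.1 v :=
      ((WeakDual.eval_continuous (S v)).comp continuous_fst).sub
        (continuous_const.mul ((WeakDual.eval_continuous v).comp continuous_fst))
    have hseq : ∀ n, (p n).1 (S v) - ((s:ℂ)) * (p n).1 v = ⟪S (x n) - ((s:ℂ)) • x n, v⟫ := by
      intro n
      rw [inner_sub_left, inner_smul_left]
      have h1 : (p n).1 (S v) = ⟪x n, S v⟫ := hg n (S v)
      have h2 : (p n).1 v = ⟪x n, v⟫ := hg n v
      rw [h1, h2, hSinner' (x n) v, ← hSinner (x n) v, Complex.conj_ofReal]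
    have hlim : Tendsto (fun n => (p n).1 (S v) - ((s:ℂ)) * (p n).1 v) atTop (𝓝 0) :=
      Filter.Tendsto.congr (fun n => (hseq n).symm) (hv0 v)
    have := cluster_apply' hcl hφ hlim
    have h3 : f₀ (S v) - ((s:ℂ)) * f₀ v = 0 := this
    rw [hx₀ v, hx₀ (S v)]
    linear_combination h3
  have hSx₀ : S x₀ = ((s:ℂ)) • x₀ := by
    refine ext_inner_right ℂ fun v => ?_
    rw [inner_smul_left, Complex.conj_ofReal, hSinner x₀ v, ← hSinner' x₀ v, heig v]
  -- y = K x₀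
  have hyK : y = K x₀ := by
    refine ext_inner_left ℂ fun v => ?_
    have hφ : Continuous fun q : WeakDual ℂ H × H =>
        ⟪v, q.2⟫ - (starRingEnd ℂ) (q.1 (adjoint K v)) := by
      refine ((innerSL ℂ v).continuous.comp continuous_snd).sub ?_
      exact Complex.continuous_conj.comp ((WeakDual.eval_continuous (adjoint K v)).comp
        continuous_fst)
    have hseq : ∀ n, ⟪v, (p n).2⟫ - (starRingEnd ℂ) ((p n).1 (adjoint K v)) = 0 := by
      intro n
      have h1 : (p n).1 (adjoint K v) = ⟪x n, adjoint K v⟫ := hg n _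
      rw [h1, inner_conj_symm, adjoint_inner_left]
      show ⟪v, K (x n)⟫ - ⟪v, K (x n)⟫ = 0
      ring
    have hlim : Tendsto
        (fun n => ⟪v, (p n).2⟫ - (starRingEnd ℂ) ((p n).1 (adjoint K v))) atTop (𝓝 0) :=
      Filter.Tendsto.congr (fun n => (hseq n).symm) tendsto_const_nhds
    have h2 := cluster_apply' hcl hφ hlim
    have h3 : ⟪v, y⟫ - (starRingEnd ℂ) (f₀ (adjoint K v)) = 0 := h2
    have h4 : (starRingEnd ℂ) (f₀ (adjoint K v)) = ⟪v, K x₀⟫ := by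
      rw [← hx₀, inner_conj_symm, adjoint_inner_left]
    rw [← h4]; linear_combination h3
  -- ‖y‖ is bounded below
  have hyb : δ / 2 ≤ ‖y‖ := by
    have hφ : Continuous fun q : WeakDual ℂ H × H => ‖q.2‖ := continuous_norm.comp continuous_snd
    have hev : ∀ᶠ n in atTop, ‖(p n).2‖ ∈ Set.Ici (δ / 2) := by
      have hsmall : ∀ᶠ n : ℕ in atTop, (1:ℝ) / (n + 1) ≤ δ / 2 :=
        tendsto_one_div_add_atTop_nhds_zero_nat.eventually
          (eventually_le_nhds (by linarith))
      filter_upwards [hsmall] with n hn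
      have h1 : ‖T (x n)‖ ≤ ‖(T - K) (x n)‖ + ‖K (x n)‖ := by
        have : T (x n) = (T - K) (x n) + K (x n) := by simp
        rw [this]; exact norm_add_le _ _
      have h2 : ‖(T - K) (x n)‖ ≤ ‖T - K‖ := by
        simpa [hx1 n] using (T - K).le_opNorm (x n)
      have h3 := hx2 n
      show δ / 2 ≤ ‖K (x n)‖
      simp only [hδdef]
      linarith
    exact cluster_mem' hcl hφ isClosed_Ici hev
  -- x₀ is a unit-normalizable eigenvector: contradiction
  have hy0 : y ≠ 0 := by
    intro h; rw [h, norm_zero] at hyb; linarith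
  have hx₀0 : x₀ ≠ 0 := by
    intro h; rw [h, map_zero] at hyK; exact hy0 hyK
  have hx₀n : 0 < ‖x₀‖ := norm_pos_iff.2 hx₀0
  set u : H := ((‖x₀‖ : ℂ))⁻¹ • x₀ with hudef
  have hu1 : ‖u‖ = 1 := by
    rw [hudef, norm_smul, norm_inv, Complex.norm_real, Real.norm_eq_abs, abs_of_pos hx₀n,
      inv_mul_cancel₀ hx₀n.ne']
  have hSu : S u = ((s:ℂ)) • u := by
    rw [hudef, map_smul, hSx₀, smul_comm]
  have hTu : ‖T u‖ ^ 2 = s := by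
    have h3 : ⟪T u, T u⟫ = (s : ℂ) := by
      rw [← hSinner u u, hSu, inner_smul_left, Complex.conj_ofReal,
        inner_self_eq_norm_sq_to_K, hu1]
      norm_num
    have h4 := inner_self_eq_norm_sq_to_K (𝕜 := ℂ) (T u)
    rw [h3] at h4
    exact RCLike.ofReal_injective (K := ℂ) (by rw [RCLike.ofReal_pow]; exact h4.symm)
  have := hna u hu1
  nlinarith [norm_nonneg (T u), hT]


/-- If `T` is a bounded operator on an infinite-dimensional complex Hilbert space with
`‖T‖ > 1` which does not attain its norm, then `d(T, B_{K(H)}) = ‖T‖`; in particular `0` is a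
best approximation to `T` from the closed unit ball of `K(H)`. -/
theorem stmt_15 {H : Type*} [NormedAddCommGroup H] [InnerProductSpace ℂ H] [CompleteSpace H]
    (hH : ¬ FiniteDimensional ℂ H) (T : H →L[ℂ] H) (hT : 1 < ‖T‖)
    (hna : ∀ x : H, ‖x‖ = 1 → ‖T x‖ < ‖T‖) :
    Metric.infDist T {K : H →L[ℂ] H | IsCompactOperator ⇑K ∧ ‖K‖ ≤ 1} = ‖T‖ ∧
    ‖T - (0 : H →L[ℂ] H)‖
      = Metric.infDist T {K : H →L[ℂ] H | IsCompactOperator ⇑K ∧ ‖K‖ ≤ 1} := by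
  have h0 : (0 : H →L[ℂ] H) ∈ {K : H →L[ℂ] H | IsCompactOperator ⇑K ∧ ‖K‖ ≤ 1} := by
    refine ⟨?_, by simp⟩
    show IsCompactOperator (fun z : H => (0 : H →L[ℂ] H) z)
    exact isCompactOperator_zero
  have hub : Metric.infDist T {K : H →L[ℂ] H | IsCompactOperator ⇑K ∧ ‖K‖ ≤ 1} ≤ ‖T‖ := by
    have := Metric.infDist_le_dist_of_mem (x := T) h0
    rwa [dist_eq_norm, sub_zero] at this
  have hlb : ‖T‖ ≤ Metric.infDist T {K : H →L[ℂ] H | IsCompactOperator ⇑K ∧ ‖K‖ ≤ 1} := by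
    by_contra h
    push_neg at h
    obtain ⟨K, hKC, hKd⟩ := (Metric.infDist_lt_iff ⟨0, h0⟩).1 h
    rw [dist_eq_norm] at hKd
    exact absurd hKd (not_lt.2 (key_lemma T hT hna K hKC.1))
  exact ⟨le_antisymm hub hlb, by rw [sub_zero, le_antisymm hub hlb]⟩
end
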